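/- arXiv:math/0304239 — 12 statements merged into one kernel-verified Lean document; each statement's English description precedes it below -/
import Mathlib

section
/- Let H be an inner product space over 𝕜 (𝕜 = ℝ or ℂ) and let e ∈ H with ‖e‖ = 1. If φ, γ, Φ, Γ ∈ 𝕜 and x, y ∈ H satisfy Re⟨Φe − x, x − φe⟩ ≥ 0 and Re⟨Γe − y, y − γe⟩ ≥ 0, then |⟨x,y⟩ − ⟨x,e⟩⟨e,y⟩| ≤ (1/4)|Φ − φ||Γ − γ|. -/
lemma gruss_aux {𝕜 H : Type*} [RCLike 𝕜] [NormedAddCommGroup H]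
    [InnerProductSpace 𝕜 H] (e x : H) (he : ‖e‖ = 1) (φ Φ : 𝕜)
    (hx : 0 ≤ RCLike.re (inner 𝕜 (Φ • e - x) (x - φ • e) : 𝕜)) :
    ‖x - (inner 𝕜 e x : 𝕜) • e‖ ≤ ‖Φ - φ‖ / 2 := by
  set u : H := ((Φ - φ)/2) • e with hu
  set v : H := x - ((Φ + φ)/2) • e with hv
  have h1 : Φ • e - x = u - v := by
    rw [hu, hv]; module
  have h2 : x - φ • e = u + v := by
    rw [hu, hv]; module
  have hkey : RCLike.re (inner 𝕜 (Φ • e - x) (x - φ • e) : 𝕜) = ‖u‖^2 - ‖v‖^2 := by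
    rw [h1, h2, inner_sub_left, inner_add_right, inner_add_right]
    have hc : RCLike.re (inner 𝕜 v u : 𝕜) = RCLike.re (inner 𝕜 u v : 𝕜) := by
      exact inner_re_symm v u
    simp only [map_add, map_sub, inner_self_eq_norm_sq]
    rw [hc]; ring
  have hvu : ‖v‖^2 ≤ ‖u‖^2 := by nlinarith [hkey, hx]
  set x' : H := x - (inner 𝕜 e x : 𝕜) • e with hx'
  have hee : (inner 𝕜 e e : 𝕜) = 1 := by
    rw [inner_self_eq_norm_sq_to_K, he]; simp
  have horth : (inner 𝕜 x' (((inner 𝕜 e x : 𝕜) - (Φ + φ)/2) • e) : 𝕜) = 0 := by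
    rw [inner_smul_right, hx', inner_sub_left, inner_smul_left]
    rw [← inner_conj_symm e x, hee]
    simp
  have hdecomp : v = x' + ((inner 𝕜 e x : 𝕜) - (Φ + φ)/2) • e := by
    rw [hx', hv]; module
  have hnormv : ‖v‖^2 = ‖x'‖^2 + ‖((inner 𝕜 e x : 𝕜) - (Φ + φ)/2) • e‖^2 := by
    rw [hdecomp, @norm_add_sq 𝕜, horth]
    simp
  have hx'u : ‖x'‖^2 ≤ ‖u‖^2 := by nlinarith [sq_nonneg ‖((inner 𝕜 e x : 𝕜) - (Φ + φ)/2) • e‖]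
  have hnu : ‖u‖ = ‖Φ - φ‖ / 2 := by
    rw [hu, norm_smul, he]
    simp [norm_div]
  have : ‖x'‖ ≤ ‖u‖ := by
    nlinarith [norm_nonneg x', norm_nonneg u, hx'u]
  linarith [hnu ▸ this]

/-- **Grüss inequality in inner product spaces** (Theorem 1).
If `‖e‖ = 1`, `Re⟨Φe - x, x - φe⟩ ≥ 0` and `Re⟨Γe - y, y - γe⟩ ≥ 0`, then
`|⟨x,y⟩ - ⟨x,e⟩⟨e,y⟩| ≤ (1/4)|Φ - φ||Γ - γ|`. -/
theorem gruss_inner_product {𝕜 H : Type*} [RCLike 𝕜] [NormedAddCommGroup H]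
    [InnerProductSpace 𝕜 H] (e x y : H) (he : ‖e‖ = 1) (φ γ Φ Γ : 𝕜)
    (hx : 0 ≤ RCLike.re (inner 𝕜 (Φ • e - x) (x - φ • e) : 𝕜))
    (hy : 0 ≤ RCLike.re (inner 𝕜 (Γ • e - y) (y - γ • e) : 𝕜)) :
    ‖(inner 𝕜 x y : 𝕜) - (inner 𝕜 x e : 𝕜) * (inner 𝕜 e y : 𝕜)‖ ≤
      (1 / 4 : ℝ) * ‖Φ - φ‖ * ‖Γ - γ‖ := by
  have hbx := gruss_aux e x he φ Φ hx
  have hby := gruss_aux e y he γ Γ hy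
  have hee : (inner 𝕜 e e : 𝕜) = 1 := by
    rw [inner_self_eq_norm_sq_to_K, he]; simp
  have hxe : (inner 𝕜 x e : 𝕜) = starRingEnd 𝕜 (inner 𝕜 e x) := by rw [inner_conj_symm]
  have hid : (inner 𝕜 (x - (inner 𝕜 e x : 𝕜) • e) (y - (inner 𝕜 e y : 𝕜) • e) : 𝕜)
      = (inner 𝕜 x y : 𝕜) - (inner 𝕜 x e : 𝕜) * (inner 𝕜 e y : 𝕜) := by
    rw [inner_sub_left, inner_sub_right, inner_sub_right, inner_smul_left,
      inner_smul_left, inner_smul_right, inner_smul_right, hee, hxe]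
    ring
  calc ‖(inner 𝕜 x y : 𝕜) - (inner 𝕜 x e : 𝕜) * (inner 𝕜 e y : 𝕜)‖
      = ‖(inner 𝕜 (x - (inner 𝕜 e x : 𝕜) • e) (y - (inner 𝕜 e y : 𝕜) • e) : 𝕜)‖ := by rw [hid]
    _ ≤ ‖x - (inner 𝕜 e x : 𝕜) • e‖ * ‖y - (inner 𝕜 e y : 𝕜) • e‖ := norm_inner_le_norm _ _
    _ ≤ (‖Φ - φ‖ / 2) * (‖Γ - γ‖ / 2) := by
        apply mul_le_mul hbx hby (norm_nonneg _) (by positivity)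
    _ = (1 / 4 : ℝ) * ‖Φ - φ‖ * ‖Γ - γ‖ := by ring
end

section
/- Let f, g : [a,b] → 𝕜 (𝕜 = ℝ or ℂ) be Lebesgue measurable and square-integrable, and suppose there exist constants φ, γ, Φ, Γ ∈ 𝕜 such that Re[(Φ − f(x))(conj(f(x)) − conj(φ))] ≥ 0 and Re[(Γ − g(x))(conj(g(x)) − conj(γ))] ≥ 0 for almost every x ∈ [a,b]. Then |(1/(b−a))∫ₐᵇ f(x) conj(g(x)) dx − (1/(b−a))∫ₐᵇ f(x) dx · (1/(b−a))∫ₐᵇ conj(g(x)) dx| ≤ (1/4)|Φ − φ||Γ − γ|. -/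
open MeasureTheory

section Aux

variable {𝕜 : Type*} [RCLike 𝕜] {Ω : Type*} [MeasurableSpace Ω] {ν : Measure Ω}

private lemma gruss_re_key (Φ φ z : 𝕜) :
    RCLike.re ((Φ - z) * (starRingEnd 𝕜 z - starRingEnd 𝕜 φ)) =
      ‖(Φ - φ) / 2‖ ^ 2 - ‖z - (Φ + φ) / 2‖ ^ 2 := by
  have key : ∀ d w : 𝕜, RCLike.re ((d - w) * (starRingEnd 𝕜 w + starRingEnd 𝕜 d))
      = ‖d‖ ^ 2 - ‖w‖ ^ 2 := by
    intro d w
    have expand : (d - w) * (starRingEnd 𝕜 w + starRingEnd 𝕜 d)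
        = d * starRingEnd 𝕜 d - w * starRingEnd 𝕜 w
          + (d * starRingEnd 𝕜 w - w * starRingEnd 𝕜 d) := by ring
    have hsym : RCLike.re (w * starRingEnd 𝕜 d) = RCLike.re (d * starRingEnd 𝕜 w) := by
      have h2 : w * starRingEnd 𝕜 d = starRingEnd 𝕜 (d * starRingEnd 𝕜 w) := by
        rw [map_mul, RCLike.conj_conj]; ring
      rw [h2, RCLike.conj_re]
    rw [expand, map_add, map_sub, map_sub, hsym]
    rw [RCLike.mul_conj, RCLike.mul_conj, ← RCLike.ofReal_pow, ← RCLike.ofReal_pow,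
      RCLike.ofReal_re, RCLike.ofReal_re]
    ring
  have h1 : Φ - z = (Φ - φ) / 2 - (z - (Φ + φ) / 2) := by ring
  have h2 : starRingEnd 𝕜 z - starRingEnd 𝕜 φ
      = starRingEnd 𝕜 (z - (Φ + φ) / 2) + starRingEnd 𝕜 ((Φ - φ) / 2) := by
    rw [← map_add, ← map_sub]; congr 1; ring
  rw [h1, h2, key]

private lemma gruss_memLp_conj {p : ENNReal} {f : Ω → 𝕜} (hf : MemLp f p ν) :
    MemLp (fun x => starRingEnd 𝕜 (f x)) p ν :=
  hf.of_le_mul (c := 1) (RCLike.continuous_conj.comp_aestronglyMeasurable hf.1)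
    (Filter.Eventually.of_forall fun x => by simp)

private lemma gruss_var_le {ν : Measure Ω} [IsProbabilityMeasure ν] {f : Ω → 𝕜}
    (hf : MemLp f 2 ν) {C : ℝ} {m : 𝕜} (hb : ∀ᵐ x ∂ν, ‖f x - m‖ ≤ C) :
    ∫ x, ‖f x - ∫ y, f y ∂ν‖ ^ 2 ∂ν ≤ C ^ 2 := by
  set I : 𝕜 := ∫ y, f y ∂ν with hI
  set c : 𝕜 := I - m with hc
  have hfi : Integrable f ν := hf.integrable one_le_two
  have hF : MemLp (fun x => f x - I) 2 ν := hf.sub (memLp_const I)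
  have hFi : Integrable (fun x => f x - I) ν := hF.integrable one_le_two
  have hFci : Integrable (fun x => starRingEnd 𝕜 (f x - I)) ν :=
    ((gruss_memLp_conj (memLp_one_iff_integrable.2 hFi)).integrable le_rfl)
  have hFint : ∫ x, (f x - I) ∂ν = 0 := by
    rw [integral_sub hfi (integrable_const I), integral_const]
    simp [hI]
  have hF2 : Integrable (fun x => ‖f x - I‖ ^ 2) ν := hF.norm.integrable_sq
  have hcrossK : Integrable (fun x => starRingEnd 𝕜 (f x - I) * c) ν := hFci.mul_const c
  have hcross : Integrable (fun x => RCLike.re (starRingEnd 𝕜 (f x - I) * c)) ν := hcrossK.re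
  have hpt : ∀ x, ‖f x - m‖ ^ 2
      = ‖f x - I‖ ^ 2 + 2 * RCLike.re (starRingEnd 𝕜 (f x - I) * c) + ‖c‖ ^ 2 := by
    intro x
    have h1 : f x - m = (f x - I) + c := by rw [hc]; ring
    rw [h1, norm_add_sq (𝕜 := 𝕜) (f x - I) c, RCLike.inner_apply, mul_comm c]
  have hsum : ∫ x, ‖f x - m‖ ^ 2 ∂ν
      = ∫ x, ‖f x - I‖ ^ 2 ∂ν + 2 * ∫ x, RCLike.re (starRingEnd 𝕜 (f x - I) * c) ∂ν + ‖c‖ ^ 2 := by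
    simp only [hpt]
    have hAB : Integrable (fun x => ‖f x - I‖ ^ 2
        + 2 * RCLike.re (starRingEnd 𝕜 (f x - I) * c)) ν := hF2.add (hcross.const_mul 2)
    rw [integral_add hAB (integrable_const _),
      integral_add hF2 (hcross.const_mul 2), MeasureTheory.integral_const_mul, integral_const]
    simp
  have hcross0 : ∫ x, RCLike.re (starRingEnd 𝕜 (f x - I) * c) ∂ν = 0 := by
    rw [integral_re hcrossK, integral_mul_const c _, integral_conj, hFint]
    simp
  have hle : ∫ x, ‖f x - m‖ ^ 2 ∂ν ≤ C ^ 2 := by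
    have h2 : ∫ x, ‖f x - m‖ ^ 2 ∂ν ≤ ∫ _x, C ^ 2 ∂ν := by
      refine integral_mono_ae ((hf.sub (memLp_const m)).norm).integrable_sq
        (integrable_const _) ?_
      filter_upwards [hb] with x hx
      exact pow_le_pow_left₀ (norm_nonneg _) hx 2
    simpa using h2
  rw [hsum, hcross0] at hle
  nlinarith [sq_nonneg ‖c‖]

private lemma gruss_prob [IsProbabilityMeasure ν] {f g : Ω → 𝕜}
    (hf : MemLp f 2 ν) (hg : MemLp g 2 ν)
    {Cf Cg : ℝ} (hCf : 0 ≤ Cf) (hCg : 0 ≤ Cg) {mf mg : 𝕜}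
    (hbf : ∀ᵐ x ∂ν, ‖f x - mf‖ ≤ Cf) (hbg : ∀ᵐ x ∂ν, ‖g x - mg‖ ≤ Cg) :
    ‖(∫ x, f x * starRingEnd 𝕜 (g x) ∂ν)
      - (∫ x, f x ∂ν) * (∫ x, starRingEnd 𝕜 (g x) ∂ν)‖ ≤ Cf * Cg := by
  set gc : Ω → 𝕜 := fun x => starRingEnd 𝕜 (g x) with hgc_def
  have hgc : MemLp gc 2 ν := gruss_memLp_conj hg
  have hbgc : ∀ᵐ x ∂ν, ‖gc x - starRingEnd 𝕜 mg‖ ≤ Cg := by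
    filter_upwards [hbg] with x hx
    rw [hgc_def, ← map_sub, RCLike.norm_conj]
    exact hx
  set If : 𝕜 := ∫ x, f x ∂ν with hIf
  set J : 𝕜 := ∫ x, gc x ∂ν with hJ
  have hfi : Integrable f ν := hf.integrable one_le_two
  have hgci : Integrable gc ν := hgc.integrable one_le_two
  have hF : MemLp (fun x => f x - If) 2 ν := hf.sub (memLp_const If)
  have hG : MemLp (fun x => gc x - J) 2 ν := hgc.sub (memLp_const J)
  have hone : (1 : ENNReal) / 1 = 1 / 2 + 1 / 2 := by
    rw [ENNReal.div_add_div_same, one_add_one_eq_two, div_one]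
    exact (ENNReal.div_self (by norm_num) (by norm_num)).symm
  have hfg_i : Integrable (fun x => f x * gc x) ν := by
    have := hgc.smul (𝕜 := 𝕜) (r := 1) hf
    rw [memLp_one_iff_integrable] at this
    exact this
  have hFG_i : Integrable (fun x => (f x - If) * (gc x - J)) ν := by
    have := hG.smul (𝕜 := 𝕜) (r := 1) hF
    rw [memLp_one_iff_integrable] at this
    exact this
  have hcov : ∫ x, (f x - If) * (gc x - J) ∂ν
      = (∫ x, f x * gc x ∂ν) - If * J := by
    have hid : (fun x => (f x - If) * (gc x - J))
        = fun x => (f x * gc x - f x * J) - (If * gc x - If * J) := by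
      funext x; ring
    rw [hid]
    have hi1 : Integrable (fun x => f x * gc x - f x * J) ν := hfg_i.sub (hfi.mul_const J)
    have hi2 : Integrable (fun x => If * gc x - If * J) ν :=
      (hgci.const_mul If).sub (integrable_const _)
    rw [integral_sub hi1 hi2,
      integral_sub hfg_i (hfi.mul_const J),
      integral_sub (hgci.const_mul If) (integrable_const _),
      integral_mul_const, MeasureTheory.integral_const_mul, integral_const]
    simp [hIf, hJ]
  have hpq : Real.HolderConjugate 2 2 := Real.HolderConjugate.two_two
  have h2r : ∀ y : ℝ, y ^ (2 : ℝ) = y ^ 2 := fun y => by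
    rw [show (2 : ℝ) = ((2 : ℕ) : ℝ) by norm_num, Real.rpow_natCast]
  have hcs : ‖∫ x, (f x - If) * (gc x - J) ∂ν‖
      ≤ (∫ x, ‖f x - If‖ ^ 2 ∂ν) ^ (1 / 2 : ℝ) * (∫ x, ‖gc x - J‖ ^ 2 ∂ν) ^ (1 / 2 : ℝ) := by
    refine le_trans (norm_integral_le_integral_norm _) ?_
    have hnorm : (fun x => ‖(f x - If) * (gc x - J)‖)
        = fun x => ‖f x - If‖ * ‖gc x - J‖ := by
      funext x; exact norm_mul _ _
    rw [hnorm]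
    have h2 : ENNReal.ofReal (2 : ℝ) = 2 := by norm_num
    have := integral_mul_le_Lp_mul_Lq_of_nonneg (μ := ν) hpq
      (Filter.Eventually.of_forall fun x => norm_nonneg _)
      (Filter.Eventually.of_forall fun x => norm_nonneg _)
      (h2 ▸ hF.norm) (h2 ▸ hG.norm)
    simpa [h2r] using this
  have hvf := gruss_var_le hf hbf
  have hvg := gruss_var_le hgc hbgc
  have hb1 : (∫ x, ‖f x - If‖ ^ 2 ∂ν) ^ (1 / 2 : ℝ) ≤ Cf := by
    calc (∫ x, ‖f x - If‖ ^ 2 ∂ν) ^ (1 / 2 : ℝ)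
        ≤ (Cf ^ 2) ^ (1 / 2 : ℝ) :=
          Real.rpow_le_rpow (integral_nonneg fun x => sq_nonneg _) (hIf ▸ hvf) (by norm_num)
      _ = Cf := by
          rw [← Real.rpow_natCast Cf 2, ← Real.rpow_mul hCf]
          norm_num
  have hb2 : (∫ x, ‖gc x - J‖ ^ 2 ∂ν) ^ (1 / 2 : ℝ) ≤ Cg := by
    calc (∫ x, ‖gc x - J‖ ^ 2 ∂ν) ^ (1 / 2 : ℝ)
        ≤ (Cg ^ 2) ^ (1 / 2 : ℝ) :=
          Real.rpow_le_rpow (integral_nonneg fun x => sq_nonneg _) (hJ ▸ hvg) (by norm_num)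
      _ = Cg := by
          rw [← Real.rpow_natCast Cg 2, ← Real.rpow_mul hCg]
          norm_num
  calc ‖(∫ x, f x * gc x ∂ν) - If * J‖
      = ‖∫ x, (f x - If) * (gc x - J) ∂ν‖ := by rw [hcov]
    _ ≤ (∫ x, ‖f x - If‖ ^ 2 ∂ν) ^ (1 / 2 : ℝ) * (∫ x, ‖gc x - J‖ ^ 2 ∂ν) ^ (1 / 2 : ℝ) := hcs
    _ ≤ Cf * Cg := mul_le_mul hb1 hb2
        (Real.rpow_nonneg (integral_nonneg fun x => sq_nonneg _) _) hCf

end Aux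

/-- **Grüss inequality for integrals** (Corollary 1). -/
theorem gruss_integral_interval {𝕜 : Type*} [RCLike 𝕜] (a b : ℝ) (hab : a < b)
    (f g : ℝ → 𝕜)
    (hf : MemLp f 2 (volume.restrict (Set.Icc a b)))
    (hg : MemLp g 2 (volume.restrict (Set.Icc a b)))
    (φ γ Φ Γ : 𝕜)
    (hfb : ∀ᵐ x ∂(volume.restrict (Set.Icc a b)),
      0 ≤ RCLike.re ((Φ - f x) * (starRingEnd 𝕜 (f x) - starRingEnd 𝕜 φ)))
    (hgb : ∀ᵐ x ∂(volume.restrict (Set.Icc a b)),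
      0 ≤ RCLike.re ((Γ - g x) * (starRingEnd 𝕜 (g x) - starRingEnd 𝕜 γ))) :
    ‖((1 / (b - a)) • ∫ x in Set.Icc a b, f x * starRingEnd 𝕜 (g x)) -
        ((1 / (b - a)) • ∫ x in Set.Icc a b, f x) *
          ((1 / (b - a)) • ∫ x in Set.Icc a b, starRingEnd 𝕜 (g x))‖ ≤
      (1 / 4 : ℝ) * ‖Φ - φ‖ * ‖Γ - γ‖ := by
  have hba : 0 < b - a := sub_pos.2 hab
  set μ := volume.restrict (Set.Icc a b) with hμ
  have hcne : ENNReal.ofReal (b - a) ≠ 0 := by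
    simp only [ne_eq, ENNReal.ofReal_eq_zero, not_le]
    exact hba
  set c : ENNReal := (ENNReal.ofReal (b - a))⁻¹ with hcdef
  have hcne' : c ≠ ⊤ := ENNReal.inv_ne_top.2 hcne
  set ν := c • μ with hν
  haveI : IsProbabilityMeasure ν := by
    constructor
    rw [hν, Measure.smul_apply, smul_eq_mul, hμ, Measure.restrict_apply_univ, Real.volume_Icc]
    exact ENNReal.inv_mul_cancel hcne ENNReal.ofReal_ne_top
  have hfν : MemLp f 2 ν := hf.smul_measure hcne'
  have hgν : MemLp g 2 ν := hg.smul_measure hcne'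
  -- pointwise bounds
  have hbf : ∀ᵐ x ∂ν, ‖f x - (Φ + φ) / 2‖ ≤ ‖Φ - φ‖ / 2 := by
    filter_upwards [Measure.ae_smul_measure hfb c] with x hx
    rw [gruss_re_key] at hx
    have hsq : ‖f x - (Φ + φ) / 2‖ ^ 2 ≤ ‖(Φ - φ) / 2‖ ^ 2 := by linarith
    have := (pow_le_pow_iff_left₀ (norm_nonneg _) (norm_nonneg _) two_ne_zero).1 hsq
    calc ‖f x - (Φ + φ) / 2‖ ≤ ‖(Φ - φ) / 2‖ := this
      _ = ‖Φ - φ‖ / 2 := by rw [norm_div, RCLike.norm_two]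
  have hbg : ∀ᵐ x ∂ν, ‖g x - (Γ + γ) / 2‖ ≤ ‖Γ - γ‖ / 2 := by
    filter_upwards [Measure.ae_smul_measure hgb c] with x hx
    rw [gruss_re_key] at hx
    have hsq : ‖g x - (Γ + γ) / 2‖ ^ 2 ≤ ‖(Γ - γ) / 2‖ ^ 2 := by linarith
    have := (pow_le_pow_iff_left₀ (norm_nonneg _) (norm_nonneg _) two_ne_zero).1 hsq
    calc ‖g x - (Γ + γ) / 2‖ ≤ ‖(Γ - γ) / 2‖ := this
      _ = ‖Γ - γ‖ / 2 := by rw [norm_div, RCLike.norm_two]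
  have key := gruss_prob (ν := ν) hfν hgν
    (div_nonneg (norm_nonneg (Φ - φ)) (by norm_num))
    (div_nonneg (norm_nonneg (Γ - γ)) (by norm_num)) hbf hbg
  have hsc : ∀ h : ℝ → 𝕜, ∫ x, h x ∂ν = (1 / (b - a)) • ∫ x, h x ∂μ := by
    intro h
    rw [hν, integral_smul_measure, hcdef, ENNReal.toReal_inv,
      ENNReal.toReal_ofReal hba.le, one_div]
  rw [← hsc f, ← hsc (fun x => f x * starRingEnd 𝕜 (g x)), ← hsc (fun x => starRingEnd 𝕜 (g x))]
  calc ‖(∫ x, f x * starRingEnd 𝕜 (g x) ∂ν)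
        - (∫ x, f x ∂ν) * (∫ x, starRingEnd 𝕜 (g x) ∂ν)‖
      ≤ (‖Φ - φ‖ / 2) * (‖Γ - γ‖ / 2) := key
    _ = (1 / 4 : ℝ) * ‖Φ - φ‖ * ‖Γ - γ‖ := by ring
end

section
/- Let x = (x₁,…,xₙ), y = (y₁,…,yₙ) ∈ 𝕜ⁿ (𝕜 = ℝ or ℂ) and φ, γ, Φ, Γ ∈ 𝕜 be such that Re[(Φ − xᵢ)(conj(xᵢ) − conj(φ))] ≥ 0 and Re[(Γ − yᵢ)(conj(yᵢ) − conj(γ))] ≥ 0 for each i ∈ {1,…,n}. Then |(1/n)∑ᵢ₌₁ⁿ xᵢ conj(yᵢ) − (1/n)∑ᵢ₌₁ⁿ xᵢ · (1/n)∑ᵢ₌₁ⁿ conj(yᵢ)| ≤ (1/4)|Φ − φ||Γ − γ|. -/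
open Finset RCLike

lemma point_bound {𝕜 : Type*} [RCLike 𝕜] (Φ φ z : 𝕜)
    (h : 0 ≤ RCLike.re ((Φ - z) * (starRingEnd 𝕜 z - starRingEnd 𝕜 φ))) :
    ‖z - (Φ + φ) / 2‖ ^ 2 ≤ (‖Φ - φ‖ / 2) ^ 2 := by
  set d := (Φ - φ) / 2 with hd
  set w := z - (Φ + φ) / 2 with hw
  have h1 : (Φ - z) * (starRingEnd 𝕜 z - starRingEnd 𝕜 φ)
      = d * starRingEnd 𝕜 d - w * starRingEnd 𝕜 w
        + (d * starRingEnd 𝕜 w - starRingEnd 𝕜 (d * starRingEnd 𝕜 w)) := by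
    simp only [hd, hw, map_mul, map_sub, map_add, map_div₀, RCLike.conj_conj, map_ofNat]
    ring
  have h2 : RCLike.re ((Φ - z) * (starRingEnd 𝕜 z - starRingEnd 𝕜 φ))
      = ‖d‖ ^ 2 - ‖w‖ ^ 2 := by
    rw [h1, RCLike.mul_conj, RCLike.mul_conj, map_add, map_sub, map_sub,
      RCLike.conj_re, sub_self, add_zero, ← RCLike.ofReal_pow, ← RCLike.ofReal_pow,
      RCLike.ofReal_re, RCLike.ofReal_re]
  rw [h2] at h
  have : ‖d‖ = ‖Φ - φ‖ / 2 := by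
    rw [hd, norm_div, RCLike.norm_ofNat]
  linarith [this ▸ h]

lemma variance_bound {𝕜 : Type*} [RCLike 𝕜] {n : ℕ} (hn : 0 < n) (v : Fin n → 𝕜) (m : 𝕜) (r : ℝ)
    (h : ∀ i, ‖v i - m‖ ^ 2 ≤ r ^ 2) :
    ∑ i, ‖v i - (1 / (n : ℝ)) • ∑ j, v j‖ ^ 2 ≤ n * r ^ 2 := by
  have hn' : (n : ℝ) ≠ 0 := Nat.cast_ne_zero.2 hn.ne'
  set a : 𝕜 := (1 / (n : ℝ)) • ∑ j, v j with ha
  have hsum : ∑ i, (v i - a) = 0 := by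
    rw [Finset.sum_sub_distrib, Finset.sum_const, Finset.card_univ, Fintype.card_fin,
      ha, ← Nat.cast_smul_eq_nsmul ℝ, smul_smul]
    field_simp
    rw [one_smul, sub_self]
  let V : EuclideanSpace 𝕜 (Fin n) := WithLp.toLp 2 fun i => v i - a
  let W : EuclideanSpace 𝕜 (Fin n) := WithLp.toLp 2 fun i => a - m
  have horth : inner 𝕜 V W = 0 := by
    have : inner 𝕜 V W = (∑ i, starRingEnd 𝕜 (v i - a)) * (a - m) := by
      rw [PiLp.inner_apply]
      simp only [RCLike.inner_apply', V, W, PiLp.toLp_apply]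
      rw [← Finset.sum_mul]
    rw [this, ← map_sum, hsum, map_zero, zero_mul]
  have hpyth : ‖V + W‖ ^ 2 = ‖V‖ ^ 2 + ‖W‖ ^ 2 := by
    have := norm_add_sq_eq_norm_sq_add_norm_sq_of_inner_eq_zero V W horth
    simpa [sq] using this
  have hVsq : ‖V‖ ^ 2 = ∑ i, ‖v i - a‖ ^ 2 := by
    rw [EuclideanSpace.norm_eq, Real.sq_sqrt]
    positivity
  have hVWsq : ‖V + W‖ ^ 2 = ∑ i, ‖v i - m‖ ^ 2 := by
    rw [EuclideanSpace.norm_eq, Real.sq_sqrt]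
    · congr 1; funext i
      congr 1
      show ‖(v i - a) + (a - m)‖ = _
      congr 1; ring
    · positivity
  have hsum2 : ∑ i, ‖v i - m‖ ^ 2 ≤ n * r ^ 2 := by
    calc ∑ i, ‖v i - m‖ ^ 2 ≤ ∑ _i : Fin n, r ^ 2 := Finset.sum_le_sum fun i _ => h i
    _ = n * r ^ 2 := by rw [Finset.sum_const, Finset.card_univ, Fintype.card_fin, nsmul_eq_mul]
  have hWnn : 0 ≤ ‖W‖ ^ 2 := by positivity
  linarith [hpyth, hVsq ▸ hpyth, hVWsq]

/-- **Grüss inequality for sums** (Corollary 2). -/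
theorem gruss_discrete {𝕜 : Type*} [RCLike 𝕜] (n : ℕ) (hn : 0 < n)
    (x y : Fin n → 𝕜) (φ γ Φ Γ : 𝕜)
    (hx : ∀ i, 0 ≤ RCLike.re ((Φ - x i) * (starRingEnd 𝕜 (x i) - starRingEnd 𝕜 φ)))
    (hy : ∀ i, 0 ≤ RCLike.re ((Γ - y i) * (starRingEnd 𝕜 (y i) - starRingEnd 𝕜 γ))) :
    ‖((1 / (n : ℝ)) • ∑ i, x i * starRingEnd 𝕜 (y i)) -
        ((1 / (n : ℝ)) • ∑ i, x i) * ((1 / (n : ℝ)) • ∑ i, starRingEnd 𝕜 (y i))‖ ≤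
      (1 / 4 : ℝ) * ‖Φ - φ‖ * ‖Γ - γ‖ := by
  have hn' : (n : ℝ) ≠ 0 := Nat.cast_ne_zero.2 hn.ne'
  have hnK : (n : 𝕜) ≠ 0 := Nat.cast_ne_zero.2 hn.ne'
  set a : 𝕜 := (1 / (n : ℝ)) • ∑ i, x i with ha
  set b : 𝕜 := (1 / (n : ℝ)) • ∑ i, y i with hb
  have hconjb : starRingEnd 𝕜 b = (1 / (n : ℝ)) • ∑ i, starRingEnd 𝕜 (y i) := by
    rw [hb, RCLike.real_smul_eq_coe_mul, RCLike.real_smul_eq_coe_mul, map_mul, map_sum,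
      RCLike.conj_ofReal]
  -- rewrite the LHS as (1/n) • centered sum
  have key : ((1 / (n : ℝ)) • ∑ i, x i * starRingEnd 𝕜 (y i)) -
        ((1 / (n : ℝ)) • ∑ i, x i) * ((1 / (n : ℝ)) • ∑ i, starRingEnd 𝕜 (y i))
      = (1 / (n : ℝ)) • ∑ i, (x i - a) * (starRingEnd 𝕜 (y i) - starRingEnd 𝕜 b) := by
    have hsx : ∑ i, x i = (n : 𝕜) * a := by
      rw [ha, RCLike.real_smul_eq_coe_mul]
      push_cast
      field_simp
    have hsy : ∑ i, starRingEnd 𝕜 (y i) = (n : 𝕜) * starRingEnd 𝕜 b := by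
      rw [hconjb, RCLike.real_smul_eq_coe_mul]
      push_cast
      field_simp
    have hexp : ∑ i, (x i - a) * (starRingEnd 𝕜 (y i) - starRingEnd 𝕜 b)
        = (∑ i, x i * starRingEnd 𝕜 (y i)) - (n : 𝕜) * (a * starRingEnd 𝕜 b) := by
      have : ∀ i, (x i - a) * (starRingEnd 𝕜 (y i) - starRingEnd 𝕜 b)
          = x i * starRingEnd 𝕜 (y i) - a * starRingEnd 𝕜 (y i)
            - starRingEnd 𝕜 b * x i + a * starRingEnd 𝕜 b := fun i => by ring
      simp only [this, Finset.sum_add_distrib, Finset.sum_sub_distrib, ← Finset.mul_sum,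
        Finset.sum_const, Finset.card_univ, Fintype.card_fin, nsmul_eq_mul, hsx, hsy]
      ring
    rw [hexp, smul_sub, ← hconjb, RCLike.real_smul_eq_coe_mul ((1:ℝ)/n)
      ((n : 𝕜) * (a * starRingEnd 𝕜 b))]
    push_cast
    rw [← mul_assoc]
    field_simp
    rw [smul_mul_assoc]
    rw [← smul_mul_assoc, ← ha, mul_comm a]
  rw [key]
  -- Cauchy-Schwarz
  let Xc : EuclideanSpace 𝕜 (Fin n) := WithLp.toLp 2 fun i => x i - a
  let Yc : EuclideanSpace 𝕜 (Fin n) := WithLp.toLp 2 fun i => y i - b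
  have hinner : inner 𝕜 Yc Xc = ∑ i, (x i - a) * (starRingEnd 𝕜 (y i) - starRingEnd 𝕜 b) := by
    rw [PiLp.inner_apply]
    simp only [RCLike.inner_apply', Xc, Yc, PiLp.toLp_apply, map_sub]
    exact Finset.sum_congr rfl fun i _ => by ring
  have hCS : ‖inner 𝕜 Yc Xc‖ ≤ ‖Yc‖ * ‖Xc‖ := norm_inner_le_norm Yc Xc
  have hXb : ‖Xc‖ ≤ Real.sqrt n * (‖Φ - φ‖ / 2) := by
    have h1 : ∑ i, ‖x i - a‖ ^ 2 ≤ n * (‖Φ - φ‖ / 2) ^ 2 :=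
      variance_bound hn x ((Φ + φ) / 2) (‖Φ - φ‖ / 2) fun i => point_bound Φ φ (x i) (hx i)
    rw [EuclideanSpace.norm_eq]
    calc Real.sqrt (∑ i, ‖Xc i‖ ^ 2) ≤ Real.sqrt ((n : ℝ) * (‖Φ - φ‖ / 2) ^ 2) :=
          Real.sqrt_le_sqrt h1
    _ = Real.sqrt n * (‖Φ - φ‖ / 2) := by
        rw [Real.sqrt_mul (Nat.cast_nonneg n), Real.sqrt_sq (by positivity)]
  have hYb : ‖Yc‖ ≤ Real.sqrt n * (‖Γ - γ‖ / 2) := by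
    have h1 : ∑ i, ‖y i - b‖ ^ 2 ≤ n * (‖Γ - γ‖ / 2) ^ 2 :=
      variance_bound hn y ((Γ + γ) / 2) (‖Γ - γ‖ / 2) fun i => point_bound Γ γ (y i) (hy i)
    rw [EuclideanSpace.norm_eq]
    calc Real.sqrt (∑ i, ‖Yc i‖ ^ 2) ≤ Real.sqrt ((n : ℝ) * (‖Γ - γ‖ / 2) ^ 2) :=
          Real.sqrt_le_sqrt h1
    _ = Real.sqrt n * (‖Γ - γ‖ / 2) := by
        rw [Real.sqrt_mul (Nat.cast_nonneg n), Real.sqrt_sq (by positivity)]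
  rw [norm_smul, ← hinner]
  have hsq : Real.sqrt n * Real.sqrt n = (n : ℝ) := Real.mul_self_sqrt (Nat.cast_nonneg n)
  have hb1 : ‖inner 𝕜 Yc Xc‖ ≤ (n : ℝ) * (‖Γ - γ‖ / 2) * (‖Φ - φ‖ / 2) := by
    calc ‖inner 𝕜 Yc Xc‖ ≤ ‖Yc‖ * ‖Xc‖ := hCS
    _ ≤ (Real.sqrt n * (‖Γ - γ‖ / 2)) * (Real.sqrt n * (‖Φ - φ‖ / 2)) := by
        apply mul_le_mul hYb hXb (norm_nonneg _) (by positivity)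
    _ = (n : ℝ) * (‖Γ - γ‖ / 2) * (‖Φ - φ‖ / 2) := by
        rw [mul_mul_mul_comm, hsq]; ring
  have hpos : ‖(1 / (n : ℝ))‖ = 1 / (n : ℝ) := by
    rw [Real.norm_eq_abs, abs_of_pos (by positivity)]
  rw [hpos]
  calc (1 / (n : ℝ)) * ‖inner 𝕜 Yc Xc‖
      ≤ (1 / (n : ℝ)) * ((n : ℝ) * (‖Γ - γ‖ / 2) * (‖Φ - φ‖ / 2)) := by
        apply mul_le_mul_of_nonneg_left hb1 (by positivity)
  _ = (1 / 4 : ℝ) * ‖Φ - φ‖ * ‖Γ - γ‖ := by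
      field_simp
      ring
end

section
/- Let H be an inner product space over 𝕜 (𝕜 = ℝ or ℂ), x, y, e ∈ H with ‖e‖ = 1, and scalars a, A, b, B ∈ 𝕜 with Re(conj(a)·A) > 0 and Re(conj(b)·B) > 0. If Re⟨Ae − x, x − ae⟩ ≥ 0 and Re⟨Be − y, y − be⟩ ≥ 0, then |⟨x,y⟩ − ⟨x,e⟩⟨e,y⟩| ≤ (1/4)·M(a,A)·M(b,B)·|⟨x,e⟩⟨e,y⟩|, where M(a,A) := [((|A| − |a|)² + 4(|A·conj(a)| − Re(A·conj(a))))/Re(conj(a)·A)]^{1/2}. -/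
/-- The constant `M(a, A)` from Theorem 2. -/
noncomputable def grussM {𝕜 : Type*} [RCLike 𝕜] (a A : 𝕜) : ℝ :=
  Real.sqrt (((‖A‖ - ‖a‖) ^ 2 +
      4 * (‖A * starRingEnd 𝕜 a‖ - RCLike.re (A * starRingEnd 𝕜 a))) /
    RCLike.re (starRingEnd 𝕜 a * A))

open RCLike

lemma gruss_key {𝕜 H : Type*} [RCLike 𝕜] [NormedAddCommGroup H]
    [InnerProductSpace 𝕜 H] (x e : H) (he : ‖e‖ = 1) (a A : 𝕜)
    (haA : 0 < RCLike.re (starRingEnd 𝕜 a * A))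
    (hx : 0 ≤ RCLike.re (inner 𝕜 (A • e - x) (x - a • e) : 𝕜)) :
    ‖x - (inner 𝕜 e x : 𝕜) • e‖ ≤ 1 / 2 * grussM a A * ‖(inner 𝕜 e x : 𝕜)‖ := by
  set c : 𝕜 := inner 𝕜 e x with hc
  set p : ℝ := re (starRingEnd 𝕜 a * A) with hp
  set N : ℝ := (‖A‖ - ‖a‖) ^ 2 + 4 * (‖A * starRingEnd 𝕜 a‖ - re (A * starRingEnd 𝕜 a)) with hN
  -- expand the hypothesis
  have h1 : (inner 𝕜 e e : 𝕜) = 1 := by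
    rw [inner_self_eq_norm_sq_to_K, he]; norm_num
  have hexp : RCLike.re (inner 𝕜 (A • e - x) (x - a • e) : 𝕜) =
      re (starRingEnd 𝕜 A * c) + re (a * starRingEnd 𝕜 c) - p - ‖x‖ ^ 2 := by
    rw [hp, hc, inner_sub_left, inner_sub_right, inner_sub_right, inner_smul_left,
      inner_smul_right, inner_smul_right, inner_smul_left, h1,
      ← inner_conj_symm x e]
    simp [mul_comm]
    ring_nf
  -- real-part bound
  have hre : re (starRingEnd 𝕜 A * c) + re (a * starRingEnd 𝕜 c) ≤ ‖A + a‖ * ‖c‖ := by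
    have : re (a * starRingEnd 𝕜 c) = re (starRingEnd 𝕜 a * c) := by
      rw [← RCLike.conj_re (a * starRingEnd 𝕜 c)]
      simp [mul_comm]
    rw [this, ← map_add, ← add_mul, ← map_add]
    calc re ((starRingEnd 𝕜 (A + a)) * c) ≤ ‖(starRingEnd 𝕜 (A + a)) * c‖ := RCLike.re_le_norm _
      _ = ‖A + a‖ * ‖c‖ := by rw [norm_mul, RCLike.norm_conj]
  have hnx : ‖x‖ ^ 2 ≤ ‖A + a‖ * ‖c‖ - p := by
    rw [hexp] at hx; linarith
  -- norm of the deflated vector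
  have hx' : ‖x - c • e‖ ^ 2 = ‖x‖ ^ 2 - ‖c‖ ^ 2 := by
    rw [@norm_sub_sq 𝕜]
    have : (inner 𝕜 x (c • e) : 𝕜) = c * starRingEnd 𝕜 c := by
      rw [inner_smul_right, ← inner_conj_symm x e, ← hc]
    rw [this, RCLike.mul_conj]
    have h4 : re ((‖c‖ : 𝕜) ^ 2) = ‖c‖ ^ 2 := by
      rw [← RCLike.ofReal_pow, RCLike.ofReal_re]
    rw [h4, norm_smul, he, mul_one]
    ring
  have hNnn : 0 ≤ N := by
    have : p ≤ ‖a‖ * ‖A‖ := by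
      calc p ≤ ‖starRingEnd 𝕜 a * A‖ := RCLike.re_le_norm _
        _ = ‖a‖ * ‖A‖ := by rw [norm_mul, RCLike.norm_conj]
    have h2 : ‖A * starRingEnd 𝕜 a‖ = ‖A‖ * ‖a‖ := by rw [norm_mul, RCLike.norm_conj]
    have h3 : re (A * starRingEnd 𝕜 a) = p := by
      rw [hp, mul_comm]
    nlinarith [sq_nonneg (‖A‖ - ‖a‖)]
  -- the main algebraic inequality
  have hmain : ‖x‖ ^ 2 - ‖c‖ ^ 2 ≤ 1 / 4 * (N / p) * ‖c‖ ^ 2 := by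
    have h2 : ‖A * starRingEnd 𝕜 a‖ = ‖A‖ * ‖a‖ := by rw [norm_mul, RCLike.norm_conj]
    have h3 : re (A * starRingEnd 𝕜 a) = p := by rw [hp, mul_comm]
    have htri : ‖A + a‖ ≤ ‖A‖ + ‖a‖ := norm_add_le _ _
    have hkey : p * (‖x‖ ^ 2 - ‖c‖ ^ 2) ≤ 1 / 4 * N * ‖c‖ ^ 2 := by
      nlinarith [sq_nonneg ((‖A‖ + ‖a‖) * ‖c‖ - 2 * p), norm_nonneg c, haA,
        mul_le_mul_of_nonneg_left htri (le_of_lt haA)]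
    have heq : 1 / 4 * (N / p) * ‖c‖ ^ 2 = (1 / 4 * N * ‖c‖ ^ 2) / p := by
      field_simp
    rw [heq, le_div_iff₀ haA]
    nlinarith [hkey]
  -- conclude
  have : ‖x - c • e‖ ^ 2 ≤ (1 / 2 * grussM a A * ‖c‖) ^ 2 := by
    rw [hx']
    have : (1 / 2 * grussM a A * ‖c‖) ^ 2 = 1 / 4 * (N / p) * ‖c‖ ^ 2 := by
      have : grussM a A ^ 2 = N / p := Real.sq_sqrt (by positivity)
      rw [mul_pow, mul_pow, this]; ring
    rw [this]; exact hmain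
  have hrhs : 0 ≤ 1 / 2 * grussM a A * ‖c‖ := by
    have : 0 ≤ grussM a A := Real.sqrt_nonneg _
    positivity
  nlinarith [norm_nonneg (x - c • e)]

/-- **A Grüss type inequality** (Theorem 2). -/
theorem gruss_companion {𝕜 H : Type*} [RCLike 𝕜] [NormedAddCommGroup H]
    [InnerProductSpace 𝕜 H] (x y e : H) (he : ‖e‖ = 1) (a A b B : 𝕜)
    (haA : 0 < RCLike.re (starRingEnd 𝕜 a * A))
    (hbB : 0 < RCLike.re (starRingEnd 𝕜 b * B))
    (hx : 0 ≤ RCLike.re (inner 𝕜 (A • e - x) (x - a • e) : 𝕜))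
    (hy : 0 ≤ RCLike.re (inner 𝕜 (B • e - y) (y - b • e) : 𝕜)) :
    ‖(inner 𝕜 x y : 𝕜) - (inner 𝕜 x e : 𝕜) * (inner 𝕜 e y : 𝕜)‖ ≤
      (1 / 4 : ℝ) * grussM a A * grussM b B * ‖(inner 𝕜 x e : 𝕜) * (inner 𝕜 e y : 𝕜)‖ := by
  set c : 𝕜 := inner 𝕜 e x with hc
  set d : 𝕜 := inner 𝕜 e y with hd
  have h1 : (inner 𝕜 e e : 𝕜) = 1 := by
    rw [inner_self_eq_norm_sq_to_K, he]; norm_num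
  have hxe : (inner 𝕜 x e : 𝕜) = starRingEnd 𝕜 c := by
    rw [hc, inner_conj_symm]
  have hinner : (inner 𝕜 (x - c • e) (y - d • e) : 𝕜) =
      (inner 𝕜 x y : 𝕜) - (inner 𝕜 x e : 𝕜) * (inner 𝕜 e y : 𝕜) := by
    rw [inner_sub_left, inner_sub_right, inner_sub_right, inner_smul_left,
      inner_smul_right, inner_smul_right, inner_smul_left, h1, hxe, ← hd]
    ring
  have hX := gruss_key x e he a A haA hx
  have hY := gruss_key y e he b B hbB hy
  rw [← hc] at hX
  rw [← hd] at hY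
  have hcs : ‖(inner 𝕜 (x - c • e) (y - d • e) : 𝕜)‖ ≤ ‖x - c • e‖ * ‖y - d • e‖ :=
    norm_inner_le_norm _ _
  have hnormrhs : ‖(inner 𝕜 x e : 𝕜) * (inner 𝕜 e y : 𝕜)‖ = ‖c‖ * ‖d‖ := by
    rw [hxe, norm_mul, RCLike.norm_conj, ← hd]
  rw [← hinner, hnormrhs]
  calc ‖(inner 𝕜 (x - c • e) (y - d • e) : 𝕜)‖ ≤ ‖x - c • e‖ * ‖y - d • e‖ := hcs
    _ ≤ (1 / 2 * grussM a A * ‖c‖) * (1 / 2 * grussM b B * ‖d‖) := by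
        apply mul_le_mul hX hY (norm_nonneg _)
        have := Real.sqrt_nonneg (((‖A‖ - ‖a‖) ^ 2 +
          4 * (‖A * starRingEnd 𝕜 a‖ - RCLike.re (A * starRingEnd 𝕜 a))) /
          RCLike.re (starRingEnd 𝕜 a * A))
        positivity
    _ = (1 / 4 : ℝ) * grussM a A * grussM b B * (‖c‖ * ‖d‖) := by ring
end

section
/- The constant 1/4 in Corollary 3 is best possible: for every constant k > 0 such that for all A > a > 0 and all x in the real inner product space ℝ² with e = (1/√2, 1/√2) satisfying ⟨Ae − x, x − ae⟩ ≥ 0 one has ‖x‖² − ⟨x,e⟩² ≤ k·((A−a)²/(aA))·⟨x,e⟩², it follows that k ≥ 1/4. -/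
/-- The unit vector `(1/√2, 1/√2)` in `ℝ²`. -/
noncomputable def grussUnitVec : EuclideanSpace ℝ (Fin 2) :=
  (EuclideanSpace.equiv (Fin 2) ℝ).symm ![1 / Real.sqrt 2, 1 / Real.sqrt 2]

/-- The extremal vector `(A/√2, 1/√2)`. -/
noncomputable def grussXVec (A : ℝ) : EuclideanSpace ℝ (Fin 2) :=
  (EuclideanSpace.equiv (Fin 2) ℝ).symm ![A / Real.sqrt 2, 1 / Real.sqrt 2]

lemma gruss_inner_xe (A : ℝ) : (inner ℝ (grussXVec A) grussUnitVec : ℝ) = (A + 1) / 2 := by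
  have h2 : Real.sqrt 2 * Real.sqrt 2 = 2 := Real.mul_self_sqrt (by norm_num)
  simp [grussXVec, grussUnitVec, PiLp.inner_apply, Fin.sum_univ_two]
  field_simp
  rw [Real.sq_sqrt (by norm_num)]
  ring

lemma gruss_norm_sq_x (A : ℝ) : ‖grussXVec A‖ ^ 2 = (A ^ 2 + 1) / 2 := by
  have h2 : Real.sqrt 2 * Real.sqrt 2 = 2 := Real.mul_self_sqrt (by norm_num)
  rw [EuclideanSpace.norm_eq, Real.sq_sqrt (by positivity)]
  simp [grussXVec, Fin.sum_univ_two]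
  field_simp
  rw [Real.sq_sqrt (by norm_num)]
  ring

lemma gruss_constraint (A : ℝ) :
    (inner ℝ (A • grussUnitVec - grussXVec A) (grussXVec A - (1:ℝ) • grussUnitVec) : ℝ) = 0 := by
  have h2 : Real.sqrt 2 * Real.sqrt 2 = 2 := Real.mul_self_sqrt (by norm_num)
  simp [grussXVec, grussUnitVec, PiLp.inner_apply, Fin.sum_univ_two, PiLp.sub_apply,
    PiLp.smul_apply, smul_eq_mul]
  right
  field_simp
  ring

/-- **Sharpness of the constant `1/4` in Corollary 3**: any constant `k > 0` making the
inequality hold for all admissible data in `ℝ²` with `e = (1/√2, 1/√2)` satisfies `k ≥ 1/4`. -/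
theorem gruss_companion_sharp (k : ℝ) (hk : 0 < k)
    (h : ∀ a A : ℝ, A > a → a > 0 → ∀ x : EuclideanSpace ℝ (Fin 2),
      0 ≤ (inner ℝ (A • grussUnitVec - x) (x - a • grussUnitVec) : ℝ) →
      ‖x‖ ^ 2 - (inner ℝ x grussUnitVec : ℝ) ^ 2 ≤
        k * ((A - a) ^ 2 / (a * A)) * (inner ℝ x grussUnitVec : ℝ) ^ 2) :
    k ≥ 1 / 4 := by
  -- Step 1: for every A > 1, k ≥ A / (A+1)^2.
  have key : ∀ A : ℝ, 1 < A → A / (A + 1) ^ 2 ≤ k := by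
    intro A hA
    have hA0 : 0 < A := lt_trans one_pos hA
    have hineq := h 1 A hA one_pos (grussXVec A) (le_of_eq (gruss_constraint A).symm)
    rw [gruss_inner_xe, gruss_norm_sq_x] at hineq
    -- hineq : (A^2+1)/2 - ((A+1)/2)^2 ≤ k * ((A-1)^2/(1*A)) * ((A+1)/2)^2
    have hAm : 0 < (A - 1) ^ 2 := pow_pos (by linarith) 2
    rw [div_le_iff₀ (by positivity)]
    have h4 : k * ((A - 1) ^ 2 / A) * ((A + 1) / 2) ^ 2 = k * (A - 1) ^ 2 * (A + 1) ^ 2 / (4 * A) := by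
      field_simp; ring
    rw [one_mul, h4, le_div_iff₀ (by positivity)] at hineq
    nlinarith [mul_pos hAm hA0]
  -- Step 2: take A = 1 + 1/(n+1) and let n → ∞.
  have htend : Filter.Tendsto (fun n : ℕ => (1 + 1 / (n + 1 : ℝ)) / ((1 + 1 / (n + 1 : ℝ)) + 1) ^ 2)
      Filter.atTop (nhds (1 / 4)) := by
    have h0 : Filter.Tendsto (fun n : ℕ => 1 / (n + 1 : ℝ)) Filter.atTop (nhds 0) :=
      tendsto_one_div_add_atTop_nhds_zero_nat
    have : Filter.Tendsto (fun n : ℕ => (1 + 1 / (n + 1 : ℝ)) / ((1 + 1 / (n + 1 : ℝ)) + 1) ^ 2)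
        Filter.atTop (nhds ((1 + 0) / ((1 + 0) + 1) ^ 2)) := by
      apply Filter.Tendsto.div
      · exact (tendsto_const_nhds.add h0)
      · exact ((tendsto_const_nhds.add h0).add tendsto_const_nhds).pow 2
      · norm_num
    norm_num at this
    convert this using 2
    norm_num
  refine le_of_tendsto htend ?_
  filter_upwards with n
  apply key
  have : (0:ℝ) < 1 / (n + 1 : ℝ) := by positivity
  linarith
end

section
/- Let H be an inner product space over 𝕜 (𝕜 = ℝ or ℂ), u, v ∈ H, and c, C ∈ 𝕜 with Re(conj(c)·C) > 0. If Re⟨Cv − u, u − cv⟩ ≥ 0, then ‖u‖·‖v‖ ≤ ((|c| + |C|)/(2·[Re(conj(c)·C)]^{1/2}))·|⟨u,v⟩|. -/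
/-- A reverse of the Schwarz inequality (from the proof of Theorem 2). -/
theorem reverse_schwarz {𝕜 H : Type*} [RCLike 𝕜] [NormedAddCommGroup H]
    [InnerProductSpace 𝕜 H] (u v : H) (c C : 𝕜)
    (hcC : 0 < RCLike.re (starRingEnd 𝕜 c * C))
    (h : 0 ≤ RCLike.re (inner 𝕜 (C • v - u) (u - c • v))) :
    ‖u‖ * ‖v‖ ≤ ((‖c‖ + ‖C‖) / (2 * Real.sqrt (RCLike.re (starRingEnd 𝕜 c * C)))) *
      ‖(inner 𝕜 u v)‖ := by
  set α : 𝕜 := inner 𝕜 u v with hα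
  set r : ℝ := RCLike.re (starRingEnd 𝕜 c * C) with hr
  have hexp : (inner 𝕜 (C • v - u) (u - c • v) : 𝕜)
      = starRingEnd 𝕜 C * inner 𝕜 v u - c * (starRingEnd 𝕜 C) * inner 𝕜 v v
        - inner 𝕜 u u + c * inner 𝕜 u v := by
    simp only [inner_sub_left, inner_sub_right, inner_smul_left, inner_smul_right]
    ring
  have h1 : RCLike.re (starRingEnd 𝕜 C * (inner 𝕜 v u : 𝕜)) = RCLike.re (C * α) := by
    rw [hα, ← inner_conj_symm u v,
      ← RCLike.conj_re (starRingEnd 𝕜 C * inner 𝕜 v u), map_mul, RCLike.conj_conj]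
  have h2 : RCLike.re (c * (starRingEnd 𝕜 C) * (inner 𝕜 v v : 𝕜)) = r * ‖v‖ ^ 2 := by
    rw [inner_self_eq_norm_sq_to_K]
    rw [show c * starRingEnd 𝕜 C * (‖v‖ : 𝕜) ^ 2 = (‖v‖ : 𝕜) ^ 2 * (c * starRingEnd 𝕜 C) by ring]
    rw [← RCLike.ofReal_pow, RCLike.re_ofReal_mul]
    have hcc : starRingEnd 𝕜 (c * starRingEnd 𝕜 C) = starRingEnd 𝕜 c * C := by
      rw [map_mul, RCLike.conj_conj]
    rw [hr, ← RCLike.conj_re (c * starRingEnd 𝕜 C), hcc]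
    ring
  have h3 : RCLike.re ((inner 𝕜 u u : 𝕜)) = ‖u‖ ^ 2 := by
    rw [inner_self_eq_norm_sq_to_K, ← RCLike.ofReal_pow, RCLike.ofReal_re]
  have key : ‖u‖ ^ 2 + r * ‖v‖ ^ 2 ≤ (‖c‖ + ‖C‖) * ‖α‖ := by
    have h4 : RCLike.re (C * α) + RCLike.re (c * α) ≤ (‖c‖ + ‖C‖) * ‖α‖ := by
      have : RCLike.re (C * α) + RCLike.re (c * α) = RCLike.re ((C + c) * α) := by
        rw [add_mul, map_add]
      rw [this]
      calc RCLike.re ((C + c) * α) ≤ ‖(C + c) * α‖ := RCLike.re_le_norm _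
        _ = ‖C + c‖ * ‖α‖ := norm_mul _ _
        _ ≤ (‖c‖ + ‖C‖) * ‖α‖ := by
            apply mul_le_mul_of_nonneg_right _ (norm_nonneg _)
            calc ‖C + c‖ ≤ ‖C‖ + ‖c‖ := norm_add_le _ _
              _ = ‖c‖ + ‖C‖ := by ring
    rw [hexp] at h
    simp only [map_add, map_sub] at h
    rw [h1, h2, h3] at h
    linarith
  have hs : 0 < Real.sqrt r := Real.sqrt_pos.mpr hcC
  have hs2 : Real.sqrt r ^ 2 = r := Real.sq_sqrt hcC.le
  have amgm : 2 * Real.sqrt r * (‖u‖ * ‖v‖) ≤ ‖u‖ ^ 2 + r * ‖v‖ ^ 2 := by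
    nlinarith [sq_nonneg (‖u‖ - Real.sqrt r * ‖v‖)]
  rw [div_mul_eq_mul_div, le_div_iff₀ (by positivity)]
  calc ‖u‖ * ‖v‖ * (2 * Real.sqrt r) = 2 * Real.sqrt r * (‖u‖ * ‖v‖) := by ring
    _ ≤ ‖u‖ ^ 2 + r * ‖v‖ ^ 2 := amgm
    _ ≤ (‖c‖ + ‖C‖) * ‖α‖ := key
end

section
/- Let H be an inner product space over 𝕜 (𝕜 = ℝ or ℂ), x, e ∈ H with ‖e‖ = 1, and a, A ∈ 𝕜. Then Re⟨Ae − x, x − ae⟩ ≥ 0 if and only if ‖x − ((a + A)/2)e‖ ≤ (1/2)|A − a|. -/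
open RCLike

/-- Equivalence of the two forms of the constraint (as in (2.1)⇔(2.2)):
`Re⟨Ae - x, x - ae⟩ ≥ 0` iff `‖x - ((a+A)/2)e‖ ≤ |A - a|/2`, for a unit vector `e`. -/
theorem re_inner_nonneg_iff_norm_le {𝕜 H : Type*} [RCLike 𝕜] [NormedAddCommGroup H]
    [InnerProductSpace 𝕜 H] (x e : H) (he : ‖e‖ = 1) (a A : 𝕜) :
    0 ≤ RCLike.re (inner 𝕜 (A • e - x) (x - a • e)) ↔
      ‖x - ((a + A) / 2) • e‖ ≤ (1 / 2 : ℝ) * ‖A - a‖ := by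
  have he2 : (inner 𝕜 e e) = 1 := by
    rw [inner_self_eq_norm_sq_to_K, he]; norm_num
  set t : 𝕜 := inner 𝕜 x e with ht
  have key : RCLike.re (inner 𝕜 (A • e - x) (x - a • e))
      = ((1/2 : ℝ) * ‖A - a‖)^2 - ‖x - ((a + A) / 2) • e‖^2 := by
    have h1 : ‖x - ((a + A) / 2) • e‖^2
        = RCLike.re (inner 𝕜 (x - ((a+A)/2) • e) (x - ((a+A)/2) • e)) :=
      (inner_self_eq_norm_sq _).symm
    have hx : RCLike.re (inner 𝕜 x x) = ‖x‖^2 := inner_self_eq_norm_sq x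
    have hex : (inner 𝕜 e x) = starRingEnd 𝕜 t := by rw [ht, inner_conj_symm]
    have hn : RCLike.normSq (2:𝕜) = 4 := by
      simp [RCLike.normSq_apply]; norm_num
    rw [h1, mul_pow, norm_sq_eq_def (z := A - a)]
    simp only [inner_sub_left, inner_sub_right, inner_smul_left, inner_smul_right,
      he2, hex, mul_one, map_sub, map_add, map_mul, map_div₀, map_ofNat,
      RCLike.mul_re, RCLike.mul_im, RCLike.conj_re, RCLike.conj_im,
      RCLike.div_re, RCLike.div_im, RCLike.ofNat_re, RCLike.ofNat_im, hx, hn]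
    ring
  rw [key, sub_nonneg]
  constructor
  · intro h
    have := Real.sqrt_le_sqrt h
    rwa [Real.sqrt_sq (norm_nonneg _), Real.sqrt_sq (by positivity)] at this
  · intro h
    exact pow_le_pow_left₀ (norm_nonneg _) h 2
end

section
/- Let H be an inner product space over 𝕜 (𝕜 = ℝ or ℂ), γ, Γ ∈ 𝕜, e, x, y ∈ H with ‖e‖ = 1, and λ ∈ (0,1). If Re⟨Γe − (λx + (1−λ)y), (λx + (1−λ)y) − γe⟩ ≥ 0, then Re[⟨x,y⟩ − ⟨x,e⟩⟨e,y⟩] ≤ (1/16)·(1/(λ(1−λ)))·|Γ − γ|². -/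
/-- **A companion of the Grüss inequality** (Theorem 3). -/
theorem gruss_convex_companion {𝕜 H : Type*} [RCLike 𝕜] [NormedAddCommGroup H]
    [InnerProductSpace 𝕜 H] (γ Γ : 𝕜) (e x y : H) (he : ‖e‖ = 1)
    (l : ℝ) (hl : l ∈ Set.Ioo (0 : ℝ) 1)
    (h : 0 ≤ RCLike.re (inner 𝕜 (Γ • e - ((l : 𝕜) • x + ((1 - l : ℝ) : 𝕜) • y))
      (((l : 𝕜) • x + ((1 - l : ℝ) : 𝕜) • y) - γ • e) : 𝕜)) :
    RCLike.re ((inner 𝕜 x y : 𝕜) - (inner 𝕜 x e : 𝕜) * (inner 𝕜 e y : 𝕜)) ≤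
      (1 / 16 : ℝ) * (1 / (l * (1 - l))) * ‖Γ - γ‖ ^ 2 := by
  obtain ⟨hl0, hl1⟩ := hl
  set z : H := (l : 𝕜) • x + ((1 - l : ℝ) : 𝕜) • y with hz
  set a : 𝕜 := inner 𝕜 e z with ha
  set u : H := x - (inner 𝕜 e x : 𝕜) • e with hu
  set v : H := y - (inner 𝕜 e y : 𝕜) • e with hv
  have hee : (inner 𝕜 e e : 𝕜) = 1 := by
    rw [inner_self_eq_norm_sq_to_K, he]; norm_num
  have hzdec : z - a • e = (l : 𝕜) • u + ((1 - l : ℝ) : 𝕜) • v := by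
    simp only [ha, hz, hu, hv, inner_add_right, inner_smul_right, smul_sub, add_smul,
      smul_smul]
    module
  have hze : (inner 𝕜 z e : 𝕜) = (starRingEnd 𝕜) a := by
    rw [ha, ← inner_conj_symm]
  have hkey : (inner 𝕜 (Γ • e - z) (z - γ • e) : 𝕜)
      = (starRingEnd 𝕜) (Γ - a) * (a - γ) - inner 𝕜 (z - a • e) (z - a • e) := by
    simp only [inner_sub_left, inner_sub_right, inner_smul_left, inner_smul_right,
      hee, hze, ← ha, map_sub]
    ring
  -- from the hypothesis
  have h1 : ‖z - a • e‖ ^ 2 ≤ RCLike.re ((starRingEnd 𝕜) (Γ - a) * (a - γ)) := by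
    have := h
    rw [hkey] at this
    rw [map_sub] at this
    have hrs : RCLike.re (inner 𝕜 (z - a • e) (z - a • e) : 𝕜) = ‖z - a • e‖ ^ 2 := by
      rw [← @inner_self_eq_norm_sq 𝕜]
    linarith [this, hrs.le, hrs.ge]
  -- bound the scalar part
  have h2 : RCLike.re ((starRingEnd 𝕜) (Γ - a) * (a - γ)) ≤ (1 / 4) * ‖Γ - γ‖ ^ 2 := by
    have hadd : ‖(Γ - a) + (a - γ)‖ ^ 2
        = ‖Γ - a‖ ^ 2 + 2 * RCLike.re ((starRingEnd 𝕜) (Γ - a) * (a - γ)) + ‖a - γ‖ ^ 2 := by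
      rw [@norm_add_sq 𝕜 𝕜, RCLike.inner_apply, mul_comm (a - γ)]
    have hsub : ‖(Γ - a) - (a - γ)‖ ^ 2
        = ‖Γ - a‖ ^ 2 - 2 * RCLike.re ((starRingEnd 𝕜) (Γ - a) * (a - γ)) + ‖a - γ‖ ^ 2 := by
      rw [@norm_sub_sq 𝕜 𝕜, RCLike.inner_apply, mul_comm (a - γ)]
    have he1 : (Γ - a) + (a - γ) = Γ - γ := by ring
    rw [he1] at hadd
    nlinarith [sq_nonneg ‖(Γ - a) - (a - γ)‖]
  -- expand the projected norm
  have hnl : ‖((l : ℝ) : 𝕜)‖ = l := by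
    rw [RCLike.norm_ofReal, abs_of_pos hl0]
  have hnl' : ‖((1 - l : ℝ) : 𝕜)‖ = 1 - l := by
    rw [RCLike.norm_ofReal, abs_of_pos (by linarith)]
  have hre : RCLike.re (inner 𝕜 ((l : 𝕜) • u) (((1 - l : ℝ) : 𝕜) • v) : 𝕜)
      = l * (1 - l) * RCLike.re (inner 𝕜 u v : 𝕜) := by
    rw [inner_smul_left, inner_smul_right, RCLike.conj_ofReal, ← mul_assoc,
      ← RCLike.ofReal_mul, RCLike.re_ofReal_mul]
  have hsum : ‖(l : 𝕜) • u + ((1 - l : ℝ) : 𝕜) • v‖ ^ 2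
      = l ^ 2 * ‖u‖ ^ 2 + 2 * (l * (1 - l) * RCLike.re (inner 𝕜 u v : 𝕜))
        + (1 - l) ^ 2 * ‖v‖ ^ 2 := by
    rw [@norm_add_sq 𝕜, hre, norm_smul, norm_smul, hnl, hnl']
    ring
  have hdiff : (0 : ℝ) ≤ l ^ 2 * ‖u‖ ^ 2 - 2 * (l * (1 - l) * RCLike.re (inner 𝕜 u v : 𝕜))
        + (1 - l) ^ 2 * ‖v‖ ^ 2 := by
    have : ‖(l : 𝕜) • u - ((1 - l : ℝ) : 𝕜) • v‖ ^ 2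
        = l ^ 2 * ‖u‖ ^ 2 - 2 * (l * (1 - l) * RCLike.re (inner 𝕜 u v : 𝕜))
          + (1 - l) ^ 2 * ‖v‖ ^ 2 := by
      rw [@norm_sub_sq 𝕜, hre, norm_smul, norm_smul, hnl, hnl']
      ring
    nlinarith [sq_nonneg ‖(l : 𝕜) • u - ((1 - l : ℝ) : 𝕜) • v‖]
  have huv : (inner 𝕜 u v : 𝕜) = (inner 𝕜 x y : 𝕜) - (inner 𝕜 x e : 𝕜) * (inner 𝕜 e y : 𝕜) := by
    simp only [hu, hv, inner_sub_left, inner_sub_right, inner_smul_left, inner_smul_right,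
      hee, inner_conj_symm]
    ring
  -- put it all together
  rw [hzdec] at h1
  rw [hsum] at h1
  set C : ℝ := RCLike.re (inner 𝕜 u v : 𝕜) with hC
  have hmain : 4 * (l * (1 - l)) * C ≤ (1 / 4) * ‖Γ - γ‖ ^ 2 := by nlinarith
  have hll : (0 : ℝ) < l * (1 - l) := by nlinarith
  have : C ≤ ‖Γ - γ‖ ^ 2 / (16 * (l * (1 - l))) := by
    rw [le_div_iff₀ (by positivity)]
    linarith [mul_le_mul_of_nonneg_left hmain (by norm_num : (0:ℝ) ≤ 4)]
  calc RCLike.re ((inner 𝕜 x y : 𝕜) - (inner 𝕜 x e : 𝕜) * (inner 𝕜 e y : 𝕜))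
      = C := by rw [hC, huv]
    _ ≤ ‖Γ - γ‖ ^ 2 / (16 * (l * (1 - l))) := this
    _ = (1 / 16 : ℝ) * (1 / (l * (1 - l))) * ‖Γ - γ‖ ^ 2 := by
        field_simp
end

section
/- Let H be an inner product space over 𝕜 (𝕜 = ℝ or ℂ), γ, Γ ∈ 𝕜, e, x, y ∈ H with ‖e‖ = 1, and λ ∈ (0,1). If both Re⟨Γe − (λx + (1−λ)y), (λx + (1−λ)y) − γe⟩ ≥ 0 and Re⟨Γe − (λx − (1−λ)y), (λx − (1−λ)y) − γe⟩ ≥ 0, then |Re[⟨x,y⟩ − ⟨x,e⟩⟨e,y⟩]| ≤ (1/16)·(1/(λ(1−λ)))·|Γ − γ|². -/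
open RCLike
lemma key' {𝕜 H : Type*} [RCLike 𝕜] [NormedAddCommGroup H] [InnerProductSpace 𝕜 H]
    (γ Γ : 𝕜) (e z : H) (he : ‖e‖ = 1)
    (h : 0 ≤ RCLike.re (inner 𝕜 (Γ • e - z) (z - γ • e) : 𝕜)) :
    ‖z‖ ^ 2 - ‖(inner 𝕜 e z : 𝕜)‖ ^ 2 ≤ (1/4) * ‖Γ - γ‖ ^ 2 := by
  simp only [inner_sub_left, inner_sub_right, inner_smul_left, inner_smul_right,
    inner_self_eq_norm_sq_to_K, he, map_sub, map_add, ← inner_conj_symm z e] at h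
  rw [@RCLike.norm_sq_eq_def 𝕜 _ (inner 𝕜 e z : 𝕜), @RCLike.norm_sq_eq_def 𝕜 _ (Γ - γ)]
  simp only [RCLike.mul_re, RCLike.conj_re, RCLike.conj_im, map_sub, map_add,
    RCLike.one_re, RCLike.one_im, RCLike.ofReal_re, RCLike.ofReal_im,
    RCLike.ofReal_one, one_pow, mul_one, mul_zero, sub_zero, ← RCLike.ofReal_pow] at h ⊢
  nlinarith [sq_nonneg (re (inner 𝕜 e z : 𝕜) - (re Γ + re γ)/2),
    sq_nonneg (im (inner 𝕜 e z : 𝕜) - (im Γ + im γ)/2)]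

set_option maxHeartbeats 1000000 in
/-- **A companion of the Grüss inequality with both signs** (Corollary 4). -/
theorem gruss_convex_companion_abs {𝕜 H : Type*} [RCLike 𝕜] [NormedAddCommGroup H]
    [InnerProductSpace 𝕜 H] (γ Γ : 𝕜) (e x y : H) (he : ‖e‖ = 1)
    (l : ℝ) (hl : l ∈ Set.Ioo (0 : ℝ) 1)
    (hplus : 0 ≤ RCLike.re (inner 𝕜 (Γ • e - ((l : 𝕜) • x + ((1 - l : ℝ) : 𝕜) • y))
      (((l : 𝕜) • x + ((1 - l : ℝ) : 𝕜) • y) - γ • e) : 𝕜))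
    (hminus : 0 ≤ RCLike.re (inner 𝕜 (Γ • e - ((l : 𝕜) • x - ((1 - l : ℝ) : 𝕜) • y))
      (((l : 𝕜) • x - ((1 - l : ℝ) : 𝕜) • y) - γ • e) : 𝕜)) :
    |RCLike.re ((inner 𝕜 x y : 𝕜) - (inner 𝕜 x e : 𝕜) * (inner 𝕜 e y : 𝕜))| ≤
      (1 / 16 : ℝ) * (1 / (l * (1 - l))) * ‖Γ - γ‖ ^ 2 := by
  obtain ⟨hl0, hl1⟩ := hl
  set u : H := (l : 𝕜) • x + ((1 - l : ℝ) : 𝕜) • y with hu_def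
  set v : H := (l : 𝕜) • x - ((1 - l : ℝ) : 𝕜) • y with hv_def
  have hu := key' γ Γ e u he hplus
  have hv := key' γ Γ e v he hminus
  have hAnn : (0:ℝ) ≤ ‖u‖ ^ 2 - ‖(inner 𝕜 e u : 𝕜)‖ ^ 2 := by
    have := norm_inner_le_norm (𝕜 := 𝕜) e u
    rw [he, one_mul] at this
    nlinarith [norm_nonneg (inner 𝕜 e u : 𝕜)]
  have hCnn : (0:ℝ) ≤ ‖v‖ ^ 2 - ‖(inner 𝕜 e v : 𝕜)‖ ^ 2 := by
    have := norm_inner_le_norm (𝕜 := 𝕜) e v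
    rw [he, one_mul] at this
    nlinarith [norm_nonneg (inner 𝕜 e v : 𝕜)]
  have hid : (‖u‖ ^ 2 - ‖(inner 𝕜 e u : 𝕜)‖ ^ 2) - (‖v‖ ^ 2 - ‖(inner 𝕜 e v : 𝕜)‖ ^ 2)
      = 4 * (l * (1 - l)) * RCLike.re ((inner 𝕜 x y : 𝕜) - (inner 𝕜 x e : 𝕜) * (inner 𝕜 e y : 𝕜)) := by
    rw [← @inner_self_eq_norm_sq 𝕜 _ _ _ _ u, ← @inner_self_eq_norm_sq 𝕜 _ _ _ _ v,
      @RCLike.norm_sq_eq_def 𝕜 _ (inner 𝕜 e u : 𝕜), @RCLike.norm_sq_eq_def 𝕜 _ (inner 𝕜 e v : 𝕜),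
      hu_def, hv_def]
    simp only [inner_add_left, inner_add_right, inner_sub_left, inner_sub_right,
      inner_smul_left, inner_smul_right, map_add, map_sub, map_mul,
      ← inner_conj_symm y x, ← inner_conj_symm e x,
      RCLike.mul_re, RCLike.mul_im, RCLike.conj_re, RCLike.conj_im, RCLike.conj_ofReal,
      RCLike.ofReal_re, RCLike.ofReal_im, mul_zero, zero_mul, sub_zero, add_zero, neg_neg,
      neg_zero, zero_sub, zero_add]
    ring
  set T := RCLike.re ((inner 𝕜 x y : 𝕜) - (inner 𝕜 x e : 𝕜) * (inner 𝕜 e y : 𝕜)) with hT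
  have hs : (0:ℝ) < l * (1 - l) := by nlinarith
  have hinv : (l * (1 - l)) * (1 / (l * (1 - l))) = 1 := by field_simp
  rw [abs_le]
  constructor <;> nlinarith [hs, hinv, hu, hv, hAnn, hCnn, hid,
    mul_pos hs (mul_pos hs hs), sq_nonneg (‖Γ - γ‖)]
end

section
/- Let H be a real inner product space, e, x, y ∈ H with ‖e‖ = 1, M, m ∈ ℝ with M > m, and λ ∈ (0,1). If both ‖λx + (1−λ)y − ((M+m)/2)e‖ ≤ (1/2)(M − m) and ‖λx − (1−λ)y − ((M+m)/2)e‖ ≤ (1/2)(M − m), then |⟨x,y⟩ − ⟨x,e⟩⟨e,y⟩| ≤ (1/16)·(1/(λ(1−λ)))·(M − m)². -/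
lemma proj_norm_sq_aux {H : Type*} [NormedAddCommGroup H] [InnerProductSpace ℝ H]
    (e : H) (he : ‖e‖ = 1) (z : H) :
    ‖z - (inner ℝ z e : ℝ) • e‖ ^ 2 = ‖z‖ ^ 2 - (inner ℝ z e : ℝ) ^ 2 := by
  rw [@norm_sub_sq_real H, real_inner_smul_right, norm_smul, Real.norm_eq_abs, he,
    mul_one, sq_abs]
  ring

lemma four_inner_identity {H : Type*} [NormedAddCommGroup H] [InnerProductSpace ℝ H]
    (a b : H) : 4 * (inner ℝ a b : ℝ) = ‖a + b‖ ^ 2 - ‖a - b‖ ^ 2 := by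
  rw [@norm_add_sq_real H, @norm_sub_sq_real H]; ring

lemma inner_proj_proj {H : Type*} [NormedAddCommGroup H] [InnerProductSpace ℝ H]
    (e x y : H) (hee : (inner ℝ e e : ℝ) = 1) (s t : ℝ) :
    (inner ℝ (s • x - (s * (inner ℝ x e : ℝ)) • e) (t • y - (t * (inner ℝ y e : ℝ)) • e) : ℝ)
      = s * t * ((inner ℝ x y : ℝ) - (inner ℝ x e : ℝ) * (inner ℝ e y : ℝ)) := by
  simp only [inner_sub_left, inner_sub_right, real_inner_smul_left, real_inner_smul_right, hee]
  rw [real_inner_comm e y]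
  ring

/-- **A companion of the Grüss inequality in real inner product spaces** (Remark 2). -/
theorem gruss_convex_companion_real {H : Type*} [NormedAddCommGroup H]
    [InnerProductSpace ℝ H] (e x y : H) (he : ‖e‖ = 1) (M m : ℝ) (hMm : m < M)
    (l : ℝ) (hl : l ∈ Set.Ioo (0 : ℝ) 1)
    (hplus : ‖l • x + (1 - l) • y - ((M + m) / 2) • e‖ ≤ (1 / 2) * (M - m))
    (hminus : ‖l • x - (1 - l) • y - ((M + m) / 2) • e‖ ≤ (1 / 2) * (M - m)) :
    |(inner ℝ x y : ℝ) - (inner ℝ x e : ℝ) * (inner ℝ e y : ℝ)| ≤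
      (1 / 16 : ℝ) * (1 / (l * (1 - l))) * (M - m) ^ 2 := by
  obtain ⟨hl0, hl1⟩ := hl
  have hee : (inner ℝ e e : ℝ) = 1 := by
    rw [real_inner_self_eq_norm_sq, he]; norm_num
  set wp := l • x + (1 - l) • y - ((M + m) / 2) • e with hwp
  set wm := l • x - (1 - l) • y - ((M + m) / 2) • e with hwm
  set a := l • x - (l * (inner ℝ x e : ℝ)) • e with ha
  set b := (1 - l) • y - ((1 - l) * (inner ℝ y e : ℝ)) • e with hb
  have hiwp : (inner ℝ wp e : ℝ) = l * inner ℝ x e + (1 - l) * inner ℝ y e - (M + m) / 2 := by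
    rw [hwp]
    simp [inner_sub_left, inner_add_left, real_inner_smul_left, hee, he]
  have hiwm : (inner ℝ wm e : ℝ) = l * inner ℝ x e - (1 - l) * inner ℝ y e - (M + m) / 2 := by
    rw [hwm]
    simp [inner_sub_left, real_inner_smul_left, hee, he]
  have hab : a + b = wp - (inner ℝ wp e : ℝ) • e := by
    rw [hiwp, ha, hb, hwp]; module
  have hab' : a - b = wm - (inner ℝ wm e : ℝ) • e := by
    rw [hiwm, ha, hb, hwm]; module
  have hp2 : ‖a + b‖ ^ 2 ≤ ((1/2) * (M - m)) ^ 2 := by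
    rw [hab, proj_norm_sq_aux e he]
    have h1 : ‖wp‖ ^ 2 ≤ ((1/2) * (M - m)) ^ 2 :=
      pow_le_pow_left₀ (norm_nonneg wp) hplus 2
    nlinarith [sq_nonneg (inner ℝ wp e : ℝ)]
  have hm2 : ‖a - b‖ ^ 2 ≤ ((1/2) * (M - m)) ^ 2 := by
    rw [hab', proj_norm_sq_aux e he]
    have h1 : ‖wm‖ ^ 2 ≤ ((1/2) * (M - m)) ^ 2 :=
      pow_le_pow_left₀ (norm_nonneg wm) hminus 2
    nlinarith [sq_nonneg (inner ℝ wm e : ℝ)]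
  have hid := four_inner_identity a b
  have habT := inner_proj_proj e x y hee l (1 - l)
  rw [← ha, ← hb] at habT
  have hsq : ((1/2) * (M - m)) ^ 2 = (1/4) * (M - m) ^ 2 := by ring
  have hub : 4 * (inner ℝ a b : ℝ) ≤ ((1/2) * (M - m)) ^ 2 := by
    rw [hid]; linarith [hp2, sq_nonneg ‖a - b‖]
  have hlb : -(4 * (inner ℝ a b : ℝ)) ≤ ((1/2) * (M - m)) ^ 2 := by
    rw [hid]; linarith [hm2, sq_nonneg ‖a + b‖]
  have hppos : (0:ℝ) < l * (1 - l) := mul_pos hl0 (by linarith)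
  have hT1 : l * (1 - l) * ((inner ℝ x y : ℝ) - (inner ℝ x e : ℝ) * (inner ℝ e y : ℝ))
      ≤ (1/16) * (M - m) ^ 2 := by linarith [hub, habT, hsq]
  have hT2 : -((1/16) * (M - m) ^ 2)
      ≤ l * (1 - l) * ((inner ℝ x y : ℝ) - (inner ℝ x e : ℝ) * (inner ℝ e y : ℝ)) := by
    linarith [hlb, habT, hsq]
  have hrw : (1 / 16 : ℝ) * (1 / (l * (1 - l))) * (M - m) ^ 2
      = ((1/16) * (M - m) ^ 2) / (l * (1 - l)) := by ring
  rw [hrw, abs_le]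
  constructor
  · rw [neg_le, le_div_iff₀ hppos]
    linarith [hT2]
  · rw [le_div_iff₀ hppos]
    linarith [hT1]
end

section
/- Let (Ω, Σ, μ) be a measure space with 0 < μ(Ω) < ∞, let f, g : Ω → ℝ be measurable, and let z, Z, t, T be real numbers with 0 < z, 0 < t, such that z ≤ f(s) ≤ Z and t ≤ g(s) ≤ T for μ-a.e. s ∈ Ω. If ∫_Ω f dμ ≠ 0 and ∫_Ω g dμ ≠ 0, then |μ(Ω)·∫_Ω f(s)g(s) dμ / (∫_Ω f dμ · ∫_Ω g dμ) − 1| ≤ (1/4)·(Z − z)(T − t)/√(ztZT). -/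
open MeasureTheory

/-- Cauchy–Schwarz inequality for integrals of real functions. -/
lemma cs_integral {Ω : Type*} [MeasurableSpace Ω] (μ : Measure Ω)
    (f g : Ω → ℝ) (hf : MemLp f 2 μ) (hg : MemLp g 2 μ) :
    |∫ s, f s * g s ∂μ| ≤ Real.sqrt (∫ s, f s ^ 2 ∂μ) * Real.sqrt (∫ s, g s ^ 2 ∂μ) := by
  have h2 : Real.HolderConjugate 2 2 := (Real.holderConjugate_iff_eq_conjExponent one_lt_two).mpr (by norm_num)
  have hf' : MemLp f (ENNReal.ofReal 2) μ := by
    simpa [ENNReal.ofReal_ofNat] using hf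
  have hg' : MemLp g (ENNReal.ofReal 2) μ := by
    simpa [ENNReal.ofReal_ofNat] using hg
  have key := integral_mul_norm_le_Lp_mul_Lq h2 hf' hg'
  have h1 : |∫ s, f s * g s ∂μ| ≤ ∫ s, ‖f s‖ * ‖g s‖ ∂μ := by
    calc |∫ s, f s * g s ∂μ| ≤ ∫ s, ‖f s * g s‖ ∂μ := by
          simpa using norm_integral_le_integral_norm (fun s => f s * g s) (μ := μ)
      _ = ∫ s, ‖f s‖ * ‖g s‖ ∂μ := by
          refine integral_congr_ae (Filter.Eventually.of_forall fun s => ?_)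
          simp [abs_mul]
  have hfeq : (∫ s, ‖f s‖ ^ (2 : ℝ) ∂μ) = ∫ s, f s ^ 2 ∂μ := by
    refine integral_congr_ae (Filter.Eventually.of_forall fun s => ?_)
    show ‖f s‖ ^ (2 : ℝ) = f s ^ 2
    rw [show ((2 : ℝ)) = ((2 : ℕ) : ℝ) by norm_num, Real.rpow_natCast]
    simp [sq_abs]
  have hgeq : (∫ s, ‖g s‖ ^ (2 : ℝ) ∂μ) = ∫ s, g s ^ 2 ∂μ := by
    refine integral_congr_ae (Filter.Eventually.of_forall fun s => ?_)
    show ‖g s‖ ^ (2 : ℝ) = g s ^ 2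
    rw [show ((2 : ℝ)) = ((2 : ℕ) : ℝ) by norm_num, Real.rpow_natCast]
    simp [sq_abs]
  rw [hfeq, hgeq] at key
  calc |∫ s, f s * g s ∂μ| ≤ ∫ s, ‖f s‖ * ‖g s‖ ∂μ := h1
    _ ≤ (∫ s, f s ^ 2 ∂μ) ^ (1 / (2 : ℝ)) * (∫ s, g s ^ 2 ∂μ) ^ (1 / (2 : ℝ)) := key
    _ = Real.sqrt (∫ s, f s ^ 2 ∂μ) * Real.sqrt (∫ s, g s ^ 2 ∂μ) := by
        rw [Real.sqrt_eq_rpow, Real.sqrt_eq_rpow]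

/-- Pólya–Szegő / Cassels type bound for the Chebyshev functional of `f` with itself. -/
lemma ps_bound {Ω : Type*} [MeasurableSpace Ω] (μ : Measure Ω) [IsFiniteMeasure μ]
    (f : Ω → ℝ) (hf : Measurable f) (z Z : ℝ) (hz : 0 < z)
    (h1 : ∀ᵐ s ∂μ, z ≤ f s ∧ f s ≤ Z) (hzZ : z ≤ Z) :
    (μ Set.univ).toReal * (∫ s, f s ^ 2 ∂μ) - (∫ s, f s ∂μ) ^ 2 ≤
      (Z - z) ^ 2 / (4 * z * Z) * (∫ s, f s ∂μ) ^ 2 := by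
  set M := (μ Set.univ).toReal with hM
  have hM0 : 0 ≤ M := ENNReal.toReal_nonneg
  have hZ : 0 < Z := lt_of_lt_of_le hz hzZ
  have hmemf : MemLp f ⊤ μ :=
    memLp_top_of_bound hf.aestronglyMeasurable Z
      (h1.mono fun s hs => by rw [Real.norm_eq_abs, abs_le]; constructor <;> nlinarith [hs.1, hs.2])
  have hmemf2 : MemLp f 2 μ := hmemf.mono_exponent le_top
  have hintf : Integrable f μ := hmemf.integrable le_top
  have hintf2 : Integrable (fun s => f s ^ 2) μ := hmemf2.integrable_sq
  have key : (∫ s, f s ^ 2 ∂μ) ≤ (z + Z) * (∫ s, f s ∂μ) - z * Z * M := by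
    have hle : ∀ᵐ s ∂μ, f s ^ 2 ≤ (z + Z) * f s - z * Z :=
      h1.mono fun s hs => by nlinarith [hs.1, hs.2]
    have : (∫ s, f s ^ 2 ∂μ) ≤ ∫ s, ((z + Z) * f s - z * Z) ∂μ :=
      integral_mono_ae hintf2 ((hintf.const_mul _).sub (integrable_const _)) hle
    have i1 : Integrable (fun s => (z + Z) * f s) μ := hintf.const_mul _
    calc (∫ s, f s ^ 2 ∂μ) ≤ ∫ s, ((z + Z) * f s - z * Z) ∂μ := this
      _ = (z + Z) * (∫ s, f s ∂μ) - z * Z * M := by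
          rw [integral_sub i1 (integrable_const _), integral_const_mul,
            integral_const, smul_eq_mul, measureReal_def, ← hM]
          ring
  set A := ∫ s, f s ∂μ
  have h4 : 0 < 4 * z * Z := by positivity
  rw [div_mul_eq_mul_div, le_div_iff₀ h4]
  nlinarith [sq_nonneg ((z + Z) * A - 2 * z * Z * M), mul_le_mul_of_nonneg_left key hM0]

set_option maxHeartbeats 1000000 in
/-- **A Grüss type inequality for real functions in ratio form** (Remark 5, (4.7)). -/
theorem gruss_integral_ratio {Ω : Type*} [MeasurableSpace Ω]
    (μ : Measure Ω) (hμ0 : 0 < μ Set.univ) (hμ : μ Set.univ < ⊤)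
    (f g : Ω → ℝ) (hf : Measurable f) (hg : Measurable g)
    (z Z t T : ℝ) (hz : 0 < z) (ht : 0 < t)
    (h1 : ∀ᵐ s ∂μ, z ≤ f s ∧ f s ≤ Z)
    (h2 : ∀ᵐ s ∂μ, t ≤ g s ∧ g s ≤ T)
    (hfI : (∫ s, f s ∂μ) ≠ 0) (hgI : (∫ s, g s ∂μ) ≠ 0) :
    |(μ Set.univ).toReal * (∫ s, f s * g s ∂μ) / ((∫ s, f s ∂μ) * ∫ s, g s ∂μ) - 1| ≤
      (1 / 4 : ℝ) * ((Z - z) * (T - t) / Real.sqrt (z * t * Z * T)) := by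
  haveI : IsFiniteMeasure μ := ⟨hμ⟩
  have hμne : μ ≠ 0 := by
    intro h; rw [h] at hμ0; simp at hμ0
  haveI : (ae μ).NeBot := ae_neBot.mpr hμne
  obtain ⟨s₀, hs₀⟩ := h1.exists
  obtain ⟨s₁, hs₁⟩ := h2.exists
  have hzZ : z ≤ Z := le_trans hs₀.1 hs₀.2
  have htT : t ≤ T := le_trans hs₁.1 hs₁.2
  have hZ : 0 < Z := lt_of_lt_of_le hz hzZ
  have hT : 0 < T := lt_of_lt_of_le ht htT
  set M := (μ Set.univ).toReal with hMdef
  have hM : 0 < M := ENNReal.toReal_pos hμ0.ne' hμ.ne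
  -- integrability
  have hmemf : MemLp f ⊤ μ :=
    memLp_top_of_bound hf.aestronglyMeasurable Z
      (h1.mono fun s hs => by rw [Real.norm_eq_abs, abs_le]; constructor <;> nlinarith [hs.1, hs.2])
  have hmemg : MemLp g ⊤ μ :=
    memLp_top_of_bound hg.aestronglyMeasurable T
      (h2.mono fun s hs => by rw [Real.norm_eq_abs, abs_le]; constructor <;> nlinarith [hs.1, hs.2])
  have hmemf2 : MemLp f 2 μ := hmemf.mono_exponent le_top
  have hmemg2 : MemLp g 2 μ := hmemg.mono_exponent le_top
  have hintf : Integrable f μ := hmemf.integrable le_top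
  have hintg : Integrable g μ := hmemg.integrable le_top
  have hintfg : Integrable (fun s => f s * g s) μ := by
    have : MemLp (fun s => f s * g s) ⊤ μ :=
      memLp_top_of_bound (hf.mul hg).aestronglyMeasurable (Z * T)
        ((h1.and h2).mono fun s ⟨hsf, hsg⟩ => by
          rw [Real.norm_eq_abs, abs_le]
          constructor <;> nlinarith [hsf.1, hsf.2, hsg.1, hsg.2])
    exact this.integrable le_top
  set A := ∫ s, f s ∂μ with hA
  set B := ∫ s, g s ∂μ with hB
  have hApos : 0 < A := by
    have : z * M ≤ A := by
      have := integral_mono_ae (integrable_const z) hintf (h1.mono fun s hs => hs.1)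
      simpa [mul_comm, measureReal_def] using this
    nlinarith
  have hBpos : 0 < B := by
    have : t * M ≤ B := by
      have := integral_mono_ae (integrable_const t) hintg (h2.mono fun s hs => hs.1)
      simpa [mul_comm, measureReal_def] using this
    nlinarith
  clear_value M A B
  -- centered functions
  set fc : Ω → ℝ := fun s => f s - A / M with hfc
  set gc : Ω → ℝ := fun s => g s - B / M with hgc
  have hmemfc : MemLp fc 2 μ := hmemf2.sub (memLp_const _)
  have hmemgc : MemLp gc 2 μ := hmemg2.sub (memLp_const _)
  have hintfc2 : Integrable (fun s => fc s ^ 2) μ := hmemfc.integrable_sq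
  have hintgc2 : Integrable (fun s => gc s ^ 2) μ := hmemgc.integrable_sq
  have hintfcgc : Integrable (fun s => fc s * gc s) μ := by
    have hs2 : Integrable (fun s => (fc s + gc s) ^ 2) μ := (hmemfc.add hmemgc).integrable_sq
    have heq : (fun s => fc s * gc s) =
        fun s => ((fc s + gc s) ^ 2 - fc s ^ 2 - gc s ^ 2) / 2 := funext fun s => by ring
    rw [heq]
    exact ((hs2.sub hintfc2).sub hintgc2).div_const 2
  clear_value fc gc
  -- integrals of centered products
  have hfcgc : (∫ s, fc s * gc s ∂μ) = (∫ s, f s * g s ∂μ) - A * B / M := by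
    have hexp : ∀ s, fc s * gc s = f s * g s - (B / M) * f s - (A / M) * g s + (A / M) * (B / M) :=
      fun s => by simp only [hfc, hgc]; ring
    rw [integral_congr_ae (Filter.Eventually.of_forall fun s => hexp s)]
    have i1 : Integrable (fun a => f a * g a - B / M * f a) μ := hintfg.sub (hintf.const_mul _)
    have i2 : Integrable (fun a => f a * g a - B / M * f a - A / M * g a) μ :=
      i1.sub (hintg.const_mul _)
    rw [integral_add i2 (integrable_const _), integral_sub i1 (hintg.const_mul _),
      integral_sub hintfg (hintf.const_mul _), integral_const_mul, integral_const_mul,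
      integral_const, smul_eq_mul, measureReal_def, ← hA, ← hB, ← hMdef]
    field_simp
    ring
  have hfc2 : (∫ s, fc s ^ 2 ∂μ) = (∫ s, f s ^ 2 ∂μ) - A ^ 2 / M := by
    have hexp : ∀ s, fc s ^ 2 = f s ^ 2 - (2 * (A / M)) * f s + (A / M) ^ 2 :=
      fun s => by simp only [hfc]; ring
    rw [integral_congr_ae (Filter.Eventually.of_forall fun s => hexp s)]
    have i1 : Integrable (fun a => f a ^ 2 - 2 * (A / M) * f a) μ :=
      hmemf2.integrable_sq.sub (hintf.const_mul _)
    rw [integral_add i1 (integrable_const _),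
      integral_sub hmemf2.integrable_sq (hintf.const_mul _), integral_const_mul,
      integral_const, smul_eq_mul, measureReal_def, ← hA, ← hMdef]
    field_simp
    ring
  have hgc2 : (∫ s, gc s ^ 2 ∂μ) = (∫ s, g s ^ 2 ∂μ) - B ^ 2 / M := by
    have hexp : ∀ s, gc s ^ 2 = g s ^ 2 - (2 * (B / M)) * g s + (B / M) ^ 2 :=
      fun s => by simp only [hgc]; ring
    rw [integral_congr_ae (Filter.Eventually.of_forall fun s => hexp s)]
    have i1 : Integrable (fun a => g a ^ 2 - 2 * (B / M) * g a) μ :=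
      hmemg2.integrable_sq.sub (hintg.const_mul _)
    rw [integral_add i1 (integrable_const _),
      integral_sub hmemg2.integrable_sq (hintg.const_mul _), integral_const_mul,
      integral_const, smul_eq_mul, measureReal_def, ← hB, ← hMdef]
    field_simp
    ring
  -- Cauchy–Schwarz step
  have hcs := cs_integral μ fc gc hmemfc hmemgc
  rw [hfcgc, hfc2, hgc2] at hcs
  -- Pólya–Szegő bounds
  have hpsf := ps_bound μ f hf z Z hz h1 hzZ
  have hpsg := ps_bound μ g hg t T ht h2 htT
  rw [← hMdef, ← hA] at hpsf
  rw [← hMdef, ← hB] at hpsg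
  -- bound on centered square integrals
  have hfc2nonneg : 0 ≤ (∫ s, f s ^ 2 ∂μ) - A ^ 2 / M := by
    rw [← hfc2]; exact integral_nonneg fun s => sq_nonneg _
  have hgc2nonneg : 0 ≤ (∫ s, g s ^ 2 ∂μ) - B ^ 2 / M := by
    rw [← hgc2]; exact integral_nonneg fun s => sq_nonneg _
  have hfc2le : (∫ s, f s ^ 2 ∂μ) - A ^ 2 / M ≤ (Z - z) ^ 2 / (4 * z * Z) * A ^ 2 / M := by
    rw [le_div_iff₀ hM]
    nlinarith [hpsf, mul_div_cancel₀ (A ^ 2) hM.ne']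
  have hgc2le : (∫ s, g s ^ 2 ∂μ) - B ^ 2 / M ≤ (T - t) ^ 2 / (4 * t * T) * B ^ 2 / M := by
    rw [le_div_iff₀ hM]
    nlinarith [hpsg, mul_div_cancel₀ (B ^ 2) hM.ne']
  -- combine square roots
  have hsq1 : Real.sqrt ((∫ s, f s ^ 2 ∂μ) - A ^ 2 / M) ≤
      (Z - z) * A / (2 * Real.sqrt (z * Z)) / Real.sqrt M := by
    have hrhs : (Z - z) ^ 2 / (4 * z * Z) * A ^ 2 / M =
        ((Z - z) * A / (2 * Real.sqrt (z * Z)) / Real.sqrt M) ^ 2 := by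
      rw [div_pow, div_pow, mul_pow, mul_pow, Real.sq_sqrt (le_of_lt (by positivity : (0:ℝ) < z * Z)),
        Real.sq_sqrt hM.le]
      ring
    rw [hrhs] at hfc2le
    calc Real.sqrt ((∫ s, f s ^ 2 ∂μ) - A ^ 2 / M)
        ≤ Real.sqrt (((Z - z) * A / (2 * Real.sqrt (z * Z)) / Real.sqrt M) ^ 2) :=
          Real.sqrt_le_sqrt hfc2le
      _ = (Z - z) * A / (2 * Real.sqrt (z * Z)) / Real.sqrt M := by
          rw [Real.sqrt_sq (div_nonneg (div_nonneg
            (mul_nonneg (by linarith) hApos.le) (by positivity)) (Real.sqrt_nonneg _))]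
  have hsq2 : Real.sqrt ((∫ s, g s ^ 2 ∂μ) - B ^ 2 / M) ≤
      (T - t) * B / (2 * Real.sqrt (t * T)) / Real.sqrt M := by
    have hrhs : (T - t) ^ 2 / (4 * t * T) * B ^ 2 / M =
        ((T - t) * B / (2 * Real.sqrt (t * T)) / Real.sqrt M) ^ 2 := by
      rw [div_pow, div_pow, mul_pow, mul_pow, Real.sq_sqrt (le_of_lt (by positivity : (0:ℝ) < t * T)),
        Real.sq_sqrt hM.le]
      ring
    rw [hrhs] at hgc2le
    calc Real.sqrt ((∫ s, g s ^ 2 ∂μ) - B ^ 2 / M)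
        ≤ Real.sqrt (((T - t) * B / (2 * Real.sqrt (t * T)) / Real.sqrt M) ^ 2) :=
          Real.sqrt_le_sqrt hgc2le
      _ = (T - t) * B / (2 * Real.sqrt (t * T)) / Real.sqrt M := by
          rw [Real.sqrt_sq (div_nonneg (div_nonneg
            (mul_nonneg (by linarith) hBpos.le) (by positivity)) (Real.sqrt_nonneg _))]
  have hcov : |(∫ s, f s * g s ∂μ) - A * B / M| ≤
      ((Z - z) * A / (2 * Real.sqrt (z * Z)) / Real.sqrt M) *
      ((T - t) * B / (2 * Real.sqrt (t * T)) / Real.sqrt M) := by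
    refine le_trans hcs (mul_le_mul hsq1 hsq2 (Real.sqrt_nonneg _)
      (div_nonneg (div_nonneg (mul_nonneg (by linarith) hApos.le) (by positivity))
        (Real.sqrt_nonneg _)))
  -- final algebra
  have hsqrtM : Real.sqrt M * Real.sqrt M = M := Real.mul_self_sqrt hM.le
  have hsplit : Real.sqrt (z * t * Z * T) = Real.sqrt (z * Z) * Real.sqrt (t * T) := by
    rw [← Real.sqrt_mul (by positivity)]
    ring_nf
  have hzZs : 0 < Real.sqrt (z * Z) := Real.sqrt_pos.mpr (by positivity)
  have htTs : 0 < Real.sqrt (t * T) := Real.sqrt_pos.mpr (by positivity)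
  have hsM : 0 < Real.sqrt M := Real.sqrt_pos.mpr hM
  have lhs_eq : |M * (∫ s, f s * g s ∂μ) / (A * B) - 1| =
      M / (A * B) * |(∫ s, f s * g s ∂μ) - A * B / M| := by
    have heq : M * (∫ s, f s * g s ∂μ) / (A * B) - 1 =
        (M / (A * B)) * ((∫ s, f s * g s ∂μ) - A * B / M) := by
      field_simp
    rw [heq, abs_mul, abs_of_pos (show (0:ℝ) < M / (A * B) by positivity)]
  rw [lhs_eq]
  have step : M / (A * B) * |(∫ s, f s * g s ∂μ) - A * B / M| ≤
      M / (A * B) * (((Z - z) * A / (2 * Real.sqrt (z * Z)) / Real.sqrt M) *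
        ((T - t) * B / (2 * Real.sqrt (t * T)) / Real.sqrt M)) :=
    mul_le_mul_of_nonneg_left hcov (by positivity)
  refine le_trans step (le_of_eq ?_)
  rw [hsplit]
  field_simp
  linear_combination (-(4 * (Z - z) * (T - t))) * hsqrtM
end

section
/- Let (Ω, Σ, μ) be a measure space, f, g, h ∈ L²(Ω, 𝕜) (𝕜 = ℝ or ℂ) with ∫_Ω |h(s)|² dμ(s) = 1, γ, Γ ∈ 𝕜, and λ ∈ (0,1). If ∫_Ω Re{[Γh(s) − (λf(s) + (1−λ)g(s))]·[λ·conj(f(s)) + (1−λ)·conj(g(s)) − conj(γ)·conj(h(s))]} dμ(s) ≥ 0, then ∫_Ω Re[f(s)conj(g(s))] dμ − Re[∫_Ω f(s)conj(h(s)) dμ · ∫_Ω h(s)conj(g(s)) dμ] ≤ (1/16)·(1/(λ(1−λ)))·|Γ − γ|². -/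
open RCLike

local notation "⟪" x ", " y "⟫" => inner _ x y

lemma scalar_quarter {𝕜 : Type*} [RCLike 𝕜] (z w : 𝕜) :
    RCLike.re (z * starRingEnd 𝕜 w) ≤ (1/4) * ‖z + w‖ ^ 2 := by
  have h1 : ‖z + w‖ ^ 2 = ‖z‖ ^ 2 + 2 * re (starRingEnd 𝕜 z * w) + ‖w‖ ^ 2 := by
    have := @norm_add_sq 𝕜 𝕜 _ _ _ z w
    simp [RCLike.inner_apply] at this ⊢; linarith
  have h2 : (0:ℝ) ≤ ‖z - w‖ ^ 2 := sq_nonneg _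
  have h3 : ‖z - w‖ ^ 2 = ‖z‖ ^ 2 - 2 * re (starRingEnd 𝕜 z * w) + ‖w‖ ^ 2 := by
    have := @norm_sub_sq 𝕜 𝕜 _ _ _ z w
    simp [RCLike.inner_apply] at this ⊢; linarith
  have h4 : re (z * starRingEnd 𝕜 w) = re (starRingEnd 𝕜 z * w) := by
    have h : z * starRingEnd 𝕜 w = starRingEnd 𝕜 (starRingEnd 𝕜 z * w) := by
      rw [map_mul, RingHomCompTriple.comp_apply]
      simp [mul_comm]
    rw [h, RCLike.conj_re]
  rw [h4]
  nlinarith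

lemma gruss_abstract {𝕜 E : Type*} [RCLike 𝕜] [NormedAddCommGroup E]
    [InnerProductSpace 𝕜 E] (F G H : E) (hH : (⟪H, H⟫ : 𝕜) = 1)
    (γ Γ : 𝕜) (l : ℝ) (hl0 : 0 < l) (hl1 : l < 1)
    (hcond : 0 ≤ re ((⟪((l:𝕜) • F + ((1-l:ℝ):𝕜) • G) - γ • H,
        Γ • H - ((l:𝕜) • F + ((1-l:ℝ):𝕜) • G)⟫ : 𝕜))) :
    re (⟪G, F⟫ : 𝕜) - re ((⟪H, F⟫ : 𝕜) * (⟪G, H⟫ : 𝕜)) ≤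
      (1/16) * (1/(l*(1-l))) * ‖Γ - γ‖ ^ 2 := by
  set m : 𝕜 := ((1-l:ℝ):𝕜) with hmdef
  set A : 𝕜 := ⟪H, F⟫ with hA
  set B : 𝕜 := ⟪H, G⟫ with hB
  set U : E := (l:𝕜) • F + m • G with hU
  set a : 𝕜 := (l:𝕜) * A + m * B with ha
  set F' : E := F - A • H with hF'
  set G' : E := G - B • H with hG'
  have hconjl : starRingEnd 𝕜 ((l:𝕜)) = (l:𝕜) := RCLike.conj_ofReal l
  have hconjm : starRingEnd 𝕜 m = m := RCLike.conj_ofReal _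
  have hGH : (⟪G, H⟫ : 𝕜) = starRingEnd 𝕜 B := by rw [hB, ← inner_conj_symm]
  have hD : (⟪G', F'⟫ : 𝕜) = ⟪G, F⟫ - A * starRingEnd 𝕜 B := by
    simp only [hF', hG', inner_sub_left, inner_sub_right, inner_smul_left, inner_smul_right,
      hH, mul_one, ← hA, ← hB, hGH]
    ring
  set D : ℝ := re ((⟪G', F'⟫ : 𝕜)) with hDdef
  have hDsymm : re ((⟪F', G'⟫ : 𝕜)) = D := by
    rw [← inner_conj_symm F' G', RCLike.conj_re]
  set P : ℝ := re ((⟪F', F'⟫ : 𝕜)) with hP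
  set Q : ℝ := re ((⟪G', G'⟫ : 𝕜)) with hQ
  have haU : (⟪H, U⟫ : 𝕜) = a := by
    simp [hU, inner_add_right, inner_smul_right, ha, ← hA, ← hB]
  have haU' : (⟪U, H⟫ : 𝕜) = starRingEnd 𝕜 a := by rw [← inner_conj_symm, haU]
  have hcomb : (l:𝕜) • F' + m • G' = U - a • H := by
    rw [hF', hG', hU, ha]; module
  have rl : ∀ z : 𝕜, re ((l:𝕜) * z) = l * re z := fun z => by
    simpa using RCLike.smul_re l z
  have rm : ∀ z : 𝕜, re (m * z) = (1-l) * re z := fun z => by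
    rw [hmdef]; simpa using RCLike.smul_re (1-l) z
  have hplus : re ((⟪(l:𝕜) • F' + m • G', (l:𝕜) • F' + m • G'⟫ : 𝕜))
      = l^2 * P + (1-l)^2 * Q + 2 * (l * (1-l)) * D := by
    simp only [inner_add_left, inner_add_right, inner_smul_left, inner_smul_right,
      hconjl, hconjm, map_add, rl, rm, hDsymm]
    simp only [← hDdef, ← hP, ← hQ]
    ring
  have hminus : 0 ≤ l^2 * P + (1-l)^2 * Q - 2 * (l * (1-l)) * D := by
    have h0 : 0 ≤ re ((⟪(l:𝕜) • F' - m • G', (l:𝕜) • F' - m • G'⟫ : 𝕜)) :=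
      inner_self_nonneg
    have hexp : re ((⟪(l:𝕜) • F' - m • G', (l:𝕜) • F' - m • G'⟫ : 𝕜))
        = l^2 * P + (1-l)^2 * Q - 2 * (l * (1-l)) * D := by
      simp only [inner_sub_left, inner_sub_right, inner_smul_left, inner_smul_right,
        hconjl, hconjm, map_sub, rl, rm, hDsymm]
      simp only [← hDdef, ← hP, ← hQ]
      ring
    linarith [hexp ▸ h0]
  have hnorm : re ((⟪U - a • H, U - a • H⟫ : 𝕜)) = re ((⟪U, U⟫ : 𝕜)) - ‖a‖^2 := by
    have e : (⟪U - a • H, U - a • H⟫ : 𝕜) = ⟪U, U⟫ - starRingEnd 𝕜 a * a := by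
      simp only [inner_sub_left, inner_sub_right, inner_smul_left, inner_smul_right,
        hH, mul_one, haU, haU']
      ring
    rw [e, map_sub, RCLike.conj_mul]
    simp [← map_pow]
  have hcond' : re ((⟪U, U⟫ : 𝕜)) ≤
      re (Γ * starRingEnd 𝕜 a) + re (starRingEnd 𝕜 γ * a) - re (starRingEnd 𝕜 γ * Γ) := by
    have hexp : (⟪U - γ • H, Γ • H - U⟫ : 𝕜) =
        Γ * starRingEnd 𝕜 a + starRingEnd 𝕜 γ * a - starRingEnd 𝕜 γ * Γ - ⟪U, U⟫ := by
      simp only [inner_sub_left, inner_sub_right, inner_smul_left, inner_smul_right,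
        hH, mul_one, haU, haU']
      ring
    have hc := hcond
    rw [hexp, map_sub, map_sub, map_add] at hc
    linarith
  have hscal : re (Γ * starRingEnd 𝕜 a) + re (starRingEnd 𝕜 γ * a) - re (starRingEnd 𝕜 γ * Γ)
      - ‖a‖^2 ≤ (1/4) * ‖Γ - γ‖^2 := by
    have key := scalar_quarter (Γ - a) (a - γ)
    have h2 : re ((Γ - a) * starRingEnd 𝕜 (a - γ)) =
        re (Γ * starRingEnd 𝕜 a) + re (starRingEnd 𝕜 γ * a) - re (starRingEnd 𝕜 γ * Γ)
          - ‖a‖^2 := by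
      have heq : (Γ - a) * starRingEnd 𝕜 (a - γ) =
          Γ * starRingEnd 𝕜 a - starRingEnd 𝕜 γ * Γ - a * starRingEnd 𝕜 a
            + starRingEnd 𝕜 γ * a := by
        rw [map_sub]
        ring_nf
      rw [heq, map_add, map_sub, map_sub]
      have e1 : re (a * starRingEnd 𝕜 a) = ‖a‖^2 := by
        rw [RCLike.mul_conj]; simp [← map_pow]
      rw [e1]; ring
    have h3 : Γ - a + (a - γ) = Γ - γ := by ring
    rw [h2, h3] at key
    linarith
  have hmain : 4 * (l * (1-l)) * D ≤ (1/4) * ‖Γ - γ‖^2 := by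
    have e1 : re ((⟪U - a • H, U - a • H⟫ : 𝕜)) = l^2 * P + (1-l)^2 * Q + 2 * (l * (1-l)) * D := by
      rw [← hcomb]; exact hplus
    linarith [e1.symm.trans hnorm]
  have hll : 0 < l * (1-l) := mul_pos hl0 (by linarith)
  have hgoal : re ((⟪G, F⟫ : 𝕜)) - re (A * starRingEnd 𝕜 B) = D := by
    rw [hDdef, hD, map_sub]
  rw [hGH, hgoal]
  have hfin : D ≤ (1/4 * ‖Γ - γ‖^2) / (4 * (l * (1-l))) := by
    rw [le_div_iff₀ (by positivity)]
    nlinarith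
  calc D ≤ (1/4 * ‖Γ - γ‖^2) / (4 * (l * (1-l))) := hfin
    _ = (1/16) * (1/(l*(1-l))) * ‖Γ - γ‖^2 := by
        have hl1' : (1 - l) ≠ 0 := (by linarith : (0:ℝ) < 1 - l).ne'
        rw [div_eq_iff (by positivity : (4 * (l * (1-l))) ≠ 0)]
        field_simp
        ring


open MeasureTheory RCLike

section Main
variable {Ω 𝕜 : Type*} [MeasurableSpace Ω] [RCLike 𝕜] {μ : Measure Ω}

lemma inner_toLp_eq (X Y : Lp 𝕜 2 μ) (x y : Ω → 𝕜) (hx : ⇑X =ᵐ[μ] x) (hy : ⇑Y =ᵐ[μ] y) :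
    (inner 𝕜 X Y : 𝕜) = ∫ s, starRingEnd 𝕜 (x s) * y s ∂μ := by
  rw [MeasureTheory.L2.inner_def]
  apply integral_congr_ae
  filter_upwards [hx, hy] with s h1 h2
  rw [RCLike.inner_apply, h1, h2, mul_comm]

lemma re_inner_toLp (X Y : Lp 𝕜 2 μ) :
    re (inner 𝕜 X Y : 𝕜) = ∫ s, re ((inner 𝕜 (X s) (Y s)) : 𝕜) ∂μ := by
  rw [MeasureTheory.L2.inner_def, ← integral_re (L2.integrable_inner X Y)]

end Main

/-- **A companion of the Grüss inequality for integrals** (Proposition 2). -/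
theorem gruss_convex_integral {Ω 𝕜 : Type*} [MeasurableSpace Ω] [RCLike 𝕜]
    (μ : Measure Ω) (f g h : Ω → 𝕜)
    (hf : MemLp f 2 μ) (hg : MemLp g 2 μ) (hh : MemLp h 2 μ)
    (hh1 : ∫ s, ‖h s‖ ^ 2 ∂μ = 1)
    (γ Γ : 𝕜) (l : ℝ) (hl : l ∈ Set.Ioo (0 : ℝ) 1)
    (hcond : 0 ≤ ∫ s, RCLike.re ((Γ * h s - ((l : 𝕜) * f s + ((1 - l : ℝ) : 𝕜) * g s)) *
      ((l : 𝕜) * starRingEnd 𝕜 (f s) + ((1 - l : ℝ) : 𝕜) * starRingEnd 𝕜 (g s) -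
        starRingEnd 𝕜 γ * starRingEnd 𝕜 (h s))) ∂μ) :
    (∫ s, RCLike.re (f s * starRingEnd 𝕜 (g s)) ∂μ) -
        RCLike.re ((∫ s, f s * starRingEnd 𝕜 (h s) ∂μ) *
          ∫ s, h s * starRingEnd 𝕜 (g s) ∂μ) ≤
      (1 / 16 : ℝ) * (1 / (l * (1 - l))) * ‖Γ - γ‖ ^ 2 := by
  obtain ⟨hl0, hl1⟩ := hl
  set F : Lp 𝕜 2 μ := hf.toLp f with hFdef
  set G : Lp 𝕜 2 μ := hg.toLp g with hGdef
  set H : Lp 𝕜 2 μ := hh.toLp h with hHdef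
  have hFae : ⇑F =ᵐ[μ] f := hf.coeFn_toLp
  have hGae : ⇑G =ᵐ[μ] g := hg.coeFn_toLp
  have hHae : ⇑H =ᵐ[μ] h := hh.coeFn_toLp
  -- norm one
  have hH1 : (inner 𝕜 H H : 𝕜) = 1 := by
    have hre : re (inner 𝕜 H H : 𝕜) = 1 := by
      rw [re_inner_toLp, ← hh1]
      apply integral_congr_ae
      filter_upwards [hHae] with s h1
      rw [← h1]
      exact inner_self_eq_norm_sq (𝕜 := 𝕜) _
    rw [@inner_self_eq_norm_sq_to_K 𝕜] at hre ⊢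
    rw [← RCLike.ofReal_pow] at hre ⊢
    rw [RCLike.ofReal_re] at hre
    rw [hre]
    simp
  -- translation of goal terms
  have t1 : (∫ s, re (f s * starRingEnd 𝕜 (g s)) ∂μ) = re (inner 𝕜 G F : 𝕜) := by
    rw [re_inner_toLp]
    apply integral_congr_ae
    filter_upwards [hFae, hGae] with s h1 h2
    rw [RCLike.inner_apply, h1, h2, mul_comm]
  have t2 : (∫ s, f s * starRingEnd 𝕜 (h s) ∂μ) = (inner 𝕜 H F : 𝕜) := by
    rw [inner_toLp_eq H F h f hHae hFae]
    exact integral_congr_ae (Filter.Eventually.of_forall fun s => mul_comm _ _)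
  have t3 : (∫ s, h s * starRingEnd 𝕜 (g s) ∂μ) = (inner 𝕜 G H : 𝕜) := by
    rw [inner_toLp_eq G H g h hGae hHae]
    exact integral_congr_ae (Filter.Eventually.of_forall fun s => mul_comm _ _)
  -- translation of hypothesis
  have hXae : ⇑(((l:𝕜) • F + ((1-l:ℝ):𝕜) • G) - γ • H) =ᵐ[μ]
      fun s => ((l:𝕜) * f s + ((1-l:ℝ):𝕜) * g s) - γ * h s := by
    filter_upwards [Lp.coeFn_sub ((l:𝕜) • F + ((1-l:ℝ):𝕜) • G) (γ • H),
      Lp.coeFn_add ((l:𝕜) • F) (((1-l:ℝ):𝕜) • G),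
      Lp.coeFn_smul ((l:𝕜)) F, Lp.coeFn_smul (((1-l:ℝ):𝕜)) G, Lp.coeFn_smul γ H,
      hFae, hGae, hHae] with s e1 e2 e3 e4 e5 e6 e7 e8
    simp only [Pi.sub_apply, Pi.add_apply, Pi.smul_apply, smul_eq_mul] at e1 e2 e3 e4 e5
    rw [e1, e2, e3, e4, e5, e6, e7, e8]
  have hYae : ⇑(Γ • H - ((l:𝕜) • F + ((1-l:ℝ):𝕜) • G)) =ᵐ[μ]
      fun s => Γ * h s - ((l:𝕜) * f s + ((1-l:ℝ):𝕜) * g s) := by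
    filter_upwards [Lp.coeFn_sub (Γ • H) ((l:𝕜) • F + ((1-l:ℝ):𝕜) • G),
      Lp.coeFn_add ((l:𝕜) • F) (((1-l:ℝ):𝕜) • G),
      Lp.coeFn_smul ((l:𝕜)) F, Lp.coeFn_smul (((1-l:ℝ):𝕜)) G, Lp.coeFn_smul Γ H,
      hFae, hGae, hHae] with s e1 e2 e3 e4 e5 e6 e7 e8
    simp only [Pi.sub_apply, Pi.add_apply, Pi.smul_apply, smul_eq_mul] at e1 e2 e3 e4 e5
    rw [e1, e2, e3, e4, e5, e6, e7, e8]
  have hcondL2 : 0 ≤ re ((inner 𝕜 (((l:𝕜) • F + ((1-l:ℝ):𝕜) • G) - γ • H)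
      (Γ • H - ((l:𝕜) • F + ((1-l:ℝ):𝕜) • G))) : 𝕜) := by
    rw [re_inner_toLp]
    refine le_of_le_of_eq hcond (integral_congr_ae ?_)
    filter_upwards [hXae, hYae] with s h1 h2
    rw [RCLike.inner_apply, h1, h2]
    congr 1
    simp only [map_add, map_sub, map_mul, RCLike.conj_ofReal]
  rw [t1, t2, t3]
  exact gruss_abstract F G H hH1 γ Γ l hl0 hl1 hcondL2
end
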